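/- arXiv:1504.05146 — 5 statements merged into one kernel-verified Lean document; each statement's English description precedes it below -/
import Mathlib

section
/- Let G be a finite group and C a conjugacy class of G such that every irreducible character of G takes value 0, 1, or -1 on C. Define χ⁺ as the sum of all irreducible characters taking value 1 on C and χ⁻ as the sum of all irreducible characters taking value -1 on C. Then χ⁺ and χ⁻ are characters of G that agree at every element of G not in C. -/
open CategoryTheory
open MonoidAlgebra
set_option linter.unusedSectionVars false
set_option linter.unnecessarySimpa false
set_option maxHeartbeats 1600000

variable {G : Type} [Group G]

/-- direct sum of two FDReps -/
noncomputable def myProd (V W : FDRep ℂ G) : FDRep ℂ G :=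
  FDRep.of (V := V × W)
    { toFun := fun g => (V.ρ g).prodMap (W.ρ g)
      map_one' := by ext x <;> simp
      map_mul' := fun g h => by
        simp only [map_mul]
        exact (LinearMap.prodMap_mul _ _ _ _).symm }

lemma myProd_char (V W : FDRep ℂ G) (g : G) :
    (myProd V W).character g = V.character g + W.character g := by
  exact
    LinearMap.trace_prodMap' (V.ρ g) (W.ρ g)

noncomputable def myZero : FDRep ℂ G :=
  FDRep.of (V := PUnit) (1 : G →* (PUnit →ₗ[ℂ] PUnit))

lemma myZero_char (g : G) : (myZero (G := G)).character g = 0 := by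
  have : (myZero (G := G)).character g = LinearMap.trace ℂ PUnit 1 := rfl
  rw [this, LinearMap.trace_one]
  exact_mod_cast congrArg (Nat.cast (R := ℂ)) ((Module.finrank_zero_iff (R := ℂ) (M := PUnit.{1})).mpr inferInstance)

open scoped Classical in
lemma char_sum (T : Finset (G → ℂ))
    (h : ∀ f ∈ T, ∃ V : FDRep ℂ G, f = V.character) :
    ∃ V : FDRep ℂ G, V.character = fun g => ∑ f ∈ T, f g := by
  classical
  induction T using Finset.induction_on with
  | empty => exact ⟨myZero, by funext g; simp [myZero_char]⟩
  | insert f T' hfT ih =>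
    obtain ⟨V, hV⟩ := h f (Finset.mem_insert_self f T')
    obtain ⟨W, hW⟩ := ih (fun f' hf' => h f' (Finset.mem_insert_of_mem hf'))
    refine ⟨myProd V W, ?_⟩
    funext g
    rw [myProd_char, Finset.sum_insert hfT, ← hV, hW]


variable {G : Type} [Group G] [Fintype G]

noncomputable instance : Invertible ((Fintype.card G : ℂ)) :=
  invertibleOfNonzero (by exact_mod_cast Fintype.card_ne_zero)

open scoped Classical in
lemma ortho (V W : FDRep ℂ G) (hV : Simple V) (hW : Simple W) :
    ∑ g : G, V.character g * W.character g⁻¹ =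
      if Nonempty (V ≅ W) then (Fintype.card G : ℂ) else 0 := by
  haveI := hV; haveI := hW
  have hne : (Nat.card G : ℂ) ≠ 0 := by exact_mod_cast Nat.card_pos.ne'
  letI : Invertible (Nat.card G : ℂ) := invertibleOfNonzero hne
  have h := FDRep.char_orthonormal (k := ℂ) V W
  rw [inv_mul_eq_iff_eq_mul₀ hne, Nat.card_eq_fintype_card] at h
  rw [h]
  split <;> simp

section
variable {G : Type} [Group G] [Fintype G]

noncomputable instance : Module.Finite ℂ (MonoidAlgebra ℂ G) := by
  infer_instance

namespace SignCC
set_option linter.unusedSectionVars false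

noncomputable abbrev Wc (W : Submodule (MonoidAlgebra ℂ G) (MonoidAlgebra ℂ G)) :
    Submodule ℂ (MonoidAlgebra ℂ G) := W.restrictScalars ℂ

noncomputable def rhoW (W : Submodule (MonoidAlgebra ℂ G) (MonoidAlgebra ℂ G)) :
    G →* (↥(Wc W) →ₗ[ℂ] ↥(Wc W)) where
  toFun g :=
    { toFun := fun w => ⟨single g 1 * ↑w, by
        simpa [smul_eq_mul] using W.smul_mem (single g 1) w.2⟩
      map_add' := fun v w => by ext; simp [mul_add]
      map_smul' := fun c w => by ext; simp [Algebra.mul_smul_comm] }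
  map_one' := by
    ext w; simp [MonoidAlgebra.one_def.symm]
  map_mul' := fun g h => by
    ext w
    simp [single_mul_single, mul_assoc]

@[simp] lemma rhoW_apply (W : Submodule (MonoidAlgebra ℂ G) (MonoidAlgebra ℂ G)) (g : G)
    (w : ↥(Wc W)) :
    (↑(rhoW W g w) : MonoidAlgebra ℂ G) = single g 1 * (w : MonoidAlgebra ℂ G) := rfl

noncomputable def repOf (W : Submodule (MonoidAlgebra ℂ G) (MonoidAlgebra ℂ G)) :
    FDRep ℂ G := FDRep.of (rhoW W)

variable (W : Submodule (MonoidAlgebra ℂ G) (MonoidAlgebra ℂ G))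

lemma invariant_bot_or_top (hW : IsAtom W) (R : Submodule ℂ ↥(Wc W))
    (hR : ∀ (g : G) (w : ↥(Wc W)), w ∈ R → rhoW W g w ∈ R) : R = ⊥ ∨ R = ⊤ := by
  classical
  set Rm : Submodule (MonoidAlgebra ℂ G) (MonoidAlgebra ℂ G) :=
    { carrier := ↑(R.map (Wc W).subtype)
      add_mem' := fun ha hb => (R.map (Wc W).subtype).add_mem ha hb
      zero_mem' := (R.map (Wc W).subtype).zero_mem
      smul_mem' := by
        intro x b hb
        obtain ⟨w, hwR, rfl⟩ := hb
        suffices h2 : x • (w : MonoidAlgebra ℂ G) ∈ R.map (Wc W).subtype by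
          simpa using h2
        have key : ∀ g : G, single g 1 * (w : MonoidAlgebra ℂ G) ∈ R.map (Wc W).subtype :=
          fun g => ⟨rhoW W g w, hR g w hwR, rfl⟩
        have : x • ((w : MonoidAlgebra ℂ G)) = ∑ g ∈ x.coeff.support, x.coeff g • (single g 1 * ↑w) := by
          rw [smul_eq_mul]
          conv_lhs => rw [← x.sum_coeff_single]
          rw [Finsupp.sum, Finset.sum_mul]
          refine Finset.sum_congr rfl fun g _ => ?_
          rw [← smul_mul_assoc, MonoidAlgebra.smul_single', mul_one]
        rw [this]
        exact Submodule.sum_mem _ fun g _ => Submodule.smul_mem _ _ (key g) } with hRm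
  have hle : Rm ≤ W := by
    rintro b ⟨w, _, rfl⟩; exact w.2
  rcases eq_or_lt_of_le hle with heq | hlt
  · right
    ext w
    simp only [Submodule.mem_top, iff_true]
    have : (w : MonoidAlgebra ℂ G) ∈ Rm := heq.symm ▸ w.2
    obtain ⟨r, hrR, hr⟩ := this
    rwa [show r = w from Subtype.ext hr] at hrR
  · left
    have hbot : Rm = ⊥ := hW.2 _ hlt
    ext w
    simp only [Submodule.mem_bot]
    constructor
    · intro hw
      have : (w : MonoidAlgebra ℂ G) ∈ Rm := ⟨w, hw, rfl⟩
      rw [hbot] at this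
      exact Subtype.ext this
    · rintro rfl; exact R.zero_mem

lemma simple_repOf (hW : IsAtom W) : Simple (repOf W) := by
  obtain ⟨w₀, hw₀W, hw₀⟩ : ∃ x ∈ W, x ≠ 0 := (Submodule.ne_bot_iff W).1 hW.1
  constructor
  intro Y f hMono
  constructor
  · intro hIso h0
    haveI : IsIso (0 : Y ⟶ repOf W) := h0 ▸ hIso
    have hid : 𝟙 (repOf W) = 0 := by
      rw [← IsIso.inv_hom_id (0 : Y ⟶ repOf W), Limits.comp_zero]
    have h2 := LinearMap.congr_fun (congrArg (fun f => f.hom.hom.hom) hid) (⟨w₀, hw₀W⟩ : ↥(Wc W))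
    exact hw₀ (congrArg Subtype.val h2)
  · intro hfnz
    have hcomm : ∀ (g : G) (y : Y), f.hom (Y.ρ g y) = rhoW W g (f.hom y) :=
      fun g y => LinearMap.congr_fun (congrArg (fun f => f.hom.hom) (f.comm g)) y
    -- injectivity
    have hinj : Function.Injective f.hom := by
      rw [← LinearMap.ker_eq_bot]
      by_contra hK
      set K := LinearMap.ker f.hom.hom.hom with hKdef
      have hinv : ∀ (g : G) (y : Y), y ∈ K → Y.ρ g y ∈ K := by
        intro g y hy
        have : f.hom (Y.ρ g y) = 0 := by
          rw [hcomm g y, show f.hom y = 0 from hy]; exact map_zero (rhoW W g)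
        exact this
      let ρK : G →* (↥K →ₗ[ℂ] ↥K) :=
        { toFun := fun g => (Y.ρ g).restrict (fun y hy => hinv g y hy)
          map_one' := LinearMap.ext fun y => Subtype.ext (by
            simp [LinearMap.restrict_coe_apply])
          map_mul' := fun g h => LinearMap.ext fun y => Subtype.ext (by
            show Y.ρ (g * h) y.1 = Y.ρ g (Y.ρ h y.1)
            rw [map_mul]; rfl) }
      let ι : FDRep.of ρK ⟶ Y :=
        ⟨FGModuleCat.ofHom K.subtype, fun g => by ext y; rfl⟩
      have hι : ι ≫ f = (0 : FDRep.of ρK ⟶ Y) ≫ f := by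
        rw [Limits.zero_comp]
        ext : 1
        ext y
        show f.hom (K.subtype y) = 0
        simpa using y.2
      have hι0 : ι = 0 := (cancel_mono f).mp hι
      apply hK
      ext y
      simp only [Submodule.mem_bot]
      constructor
      · intro hy
        have := LinearMap.congr_fun (congrArg (fun f => f.hom.hom.hom) hι0) (⟨y, hy⟩ : ↥K)
        exact this
      · rintro rfl; exact K.zero_mem
    -- surjectivity
    have hsurj : Function.Surjective f.hom := by
      rw [← LinearMap.range_eq_top]
      have hRinv : ∀ (g : G) (w : ↥(Wc W)), w ∈ LinearMap.range f.hom.hom.hom →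
          rhoW W g w ∈ LinearMap.range f.hom.hom.hom := by
        rintro g w ⟨y, rfl⟩
        exact ⟨Y.ρ g y, (hcomm g y)⟩
      rcases invariant_bot_or_top W hW _ hRinv with hbot | htop
      · exfalso
        apply hfnz
        have : f.hom.hom.hom = 0 := LinearMap.range_eq_bot.mp hbot
        ext : 1
        ext x; exact LinearMap.congr_fun this x
      · exact htop
    -- construct inverse
    let e : Y ≃ₗ[ℂ] ↥(Wc W) := LinearEquiv.ofBijective f.hom.hom.hom ⟨hinj, hsurj⟩
    have he : ∀ y : Y, e y = f.hom y := fun y => rfl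
    let finv : repOf W ⟶ Y :=
      ⟨FGModuleCat.ofHom (e.symm : ↥(Wc W) →ₗ[ℂ] Y), fun g => by
        ext w
        show e.symm (rhoW W g w) = Y.ρ g (e.symm w)
        apply e.injective
        rw [e.apply_symm_apply]
        show rhoW W g w = f.hom (Y.ρ g (e.symm w))
        rw [hcomm]
        congr 1
        exact (e.apply_symm_apply w).symm⟩
    refine ⟨⟨finv, ?_, ?_⟩⟩
    · ext : 1
      ext y; exact e.symm_apply_apply y
    · ext : 1
      ext w; exact e.apply_symm_apply w

end SignCC
end

section
variable {G : Type} [Group G] [Fintype G]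

lemma T_eq_zero (φ : G → ℂ) (hφ : ∀ x y : G, φ (y * x * y⁻¹) = φ x)
    (V : FDRep ℂ G) (hV : Simple V)
    (h0 : ∑ g : G, φ g * V.character g⁻¹ = 0) :
    (∑ g : G, φ g • V.ρ g⁻¹) = 0 := by
  haveI := hV
  set T : V →ₗ[ℂ] V := ∑ g : G, φ g • V.ρ g⁻¹ with hT
  have hTcomm : ∀ h : G, V.ρ h * T = T * V.ρ h := by
    intro h
    rw [hT, Finset.mul_sum, Finset.sum_mul]
    refine Fintype.sum_equiv ⟨fun x => h * x * h⁻¹, fun x => h⁻¹ * x * h,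
      fun x => by group, fun x => by group⟩ _ _ (fun x => ?_)
    simp only [Equiv.coe_fn_mk]
    rw [mul_smul_comm, smul_mul_assoc, ← map_mul, ← map_mul, hφ]
    congr 2
    group
  let Tm : V ⟶ V :=
    ⟨FGModuleCat.ofHom T, fun g => by ext v; exact (LinearMap.congr_fun (hTcomm g) v).symm⟩
  have hone : Module.finrank ℂ (V ⟶ V) = 1 := by
    rw [FDRep.finrank_hom_simple_simple V V]
    exact if_pos ⟨Iso.refl V⟩
  obtain ⟨c, hc⟩ := (finrank_eq_one_iff_of_nonzero' (𝟙 V) (id_nonzero V)).mp hone Tm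
  have htrace : LinearMap.trace ℂ V T = 0 := by
    rw [hT, map_sum]
    simpa only [LinearMap.map_smul, smul_eq_mul, FDRep.character] using h0
  have hTm : T = c • (LinearMap.id : V →ₗ[ℂ] V) := by
    have := congrArg (fun f => f.hom.hom.hom) hc
    exact this.symm
  have hdim : (Module.finrank ℂ V : ℂ) ≠ 0 := by
    have hpos : 0 < Module.finrank ℂ V := by
      by_contra hzero
      push_neg at hzero
      have h0' : Module.finrank ℂ V = 0 := Nat.le_zero.mp hzero
      have hsub : Subsingleton V := (Module.finrank_zero_iff (R := ℂ)).mp h0'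
      exact id_nonzero V (by
        ext : 1
        ext v; exact @Subsingleton.elim _ hsub _ _)
    exact_mod_cast hpos.ne'
  have hc0 : c = 0 := by
    have := htrace
    rw [hTm, map_smul, LinearMap.trace_id, smul_eq_mul] at this
    exact (mul_eq_zero.mp this).resolve_right hdim
  rw [hTm, hc0, zero_smul]
end

section
variable {G : Type} [Group G] [Fintype G]

lemma repOf_ρ (W : Submodule (MonoidAlgebra ℂ G) (MonoidAlgebra ℂ G)) :
    (SignCC.repOf W).ρ = SignCC.rhoW W := rfl

open scoped Classical in
lemma completeness (φ : G → ℂ) (hφ : ∀ x y : G, φ (y * x * y⁻¹) = φ x)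
    (h0 : ∀ V : FDRep ℂ G, Simple V → ∑ g : G, φ g * V.character g⁻¹ = 0) :
    φ = 0 := by
  set a : MonoidAlgebra ℂ G := ∑ g : G, single g⁻¹ (φ g) with ha
  have hcen : ∀ x : MonoidAlgebra ℂ G, a * x = x * a := by
    have key : LinearMap.mulLeft ℂ a = LinearMap.mulRight ℂ a := by
      apply MonoidAlgebra.lhom_ext'
      intro h
      refine LinearMap.ext fun c => ?_
      simp only [LinearMap.comp_apply, MonoidAlgebra.lsingle_apply,
        LinearMap.mulLeft_apply, LinearMap.mulRight_apply]
      rw [ha, Finset.sum_mul, Finset.mul_sum]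
      refine Fintype.sum_equiv ⟨fun x => h⁻¹ * x * h, fun x => h * x * h⁻¹,
        fun x => by group, fun x => by group⟩ _ _ (fun x => ?_)
      simp only [Equiv.coe_fn_mk, single_mul_single]
      rw [show φ (h⁻¹ * x * h) = φ x by
        have := hφ x h⁻¹; rwa [inv_inv] at this]
      rw [mul_comm c (φ x)]
      congr 1
      group
    exact fun x => LinearMap.congr_fun key x
  have hann : ∀ (W : Submodule (MonoidAlgebra ℂ G) (MonoidAlgebra ℂ G)), IsAtom W →
      ∀ w ∈ W, a * w = 0 := by
    intro W hW w hw
    have hsimple := SignCC.simple_repOf W hW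
    have hT := T_eq_zero φ hφ (SignCC.repOf W) hsimple (h0 _ hsimple)
    calc a * w = ∑ g : G, φ g • (single g⁻¹ 1 * w) := by
          rw [ha, Finset.sum_mul]
          refine Finset.sum_congr rfl fun g _ => ?_
          rw [← smul_mul_assoc, MonoidAlgebra.smul_single', mul_one]
      _ = 0 := by
          have h1 := LinearMap.congr_fun (show (∑ g : G, φ g • SignCC.rhoW W g⁻¹) = 0 from hT) (⟨w, hw⟩ : ↥(SignCC.Wc W))
          rw [LinearMap.sum_apply] at h1
          have h2 := congrArg Subtype.val h1
          rw [AddSubmonoidClass.coe_finset_sum] at h2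
          simp only [LinearMap.smul_apply, SetLike.val_smul, repOf_ρ,
            SignCC.rhoW_apply, LinearMap.zero_apply, ZeroMemClass.coe_zero] at h2
          exact h2
  let N : Submodule (MonoidAlgebra ℂ G) (MonoidAlgebra ℂ G) :=
    { carrier := {x | a * x = 0}
      add_mem' := fun {x y} hx hy => by
        show a * (x + y) = 0
        rw [mul_add, hx, hy, add_zero]
      zero_mem' := mul_zero a
      smul_mem' := fun c x hx => by
        show a * (c • x) = 0
        rw [smul_eq_mul, ← mul_assoc, hcen c, mul_assoc, hx, mul_zero] }
  have htop : (⊤ : Submodule (MonoidAlgebra ℂ G) (MonoidAlgebra ℂ G)) ≤ N := by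
    rw [← IsSemisimpleModule.sSup_simples_eq_top (MonoidAlgebra ℂ G) (MonoidAlgebra ℂ G)]
    refine sSup_le fun m hm => ?_
    intro x hx
    exact hann m (isSimpleModule_iff_isAtom.mp hm) x hx
  have ha0 : a = 0 := by
    have h1 : (1 : MonoidAlgebra ℂ G) ∈ N := htop Submodule.mem_top
    have : a * 1 = 0 := h1
    rwa [mul_one] at this
  funext h
  have heval : a.coeff h⁻¹ = φ h := by
    rw [ha]
    rw [MonoidAlgebra.coeff_sum, Finsupp.finset_sum_apply]
    rw [Finset.sum_eq_single h]
    · simp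
    · intro b _ hb
      have : b⁻¹ ≠ h⁻¹ := fun hc => hb (inv_injective hc)
      simp [Finsupp.single_apply, this]
    · simp
  rw [ha0] at heval
  simpa using heval.symm
end

section
variable {G : Type} [Group G] [Fintype G]

open scoped Classical in
lemma ortho_fun (S : Finset (G → ℂ))
    (hS : ∀ f : G → ℂ, f ∈ S ↔ ∃ V : FDRep ℂ G, Simple V ∧ f = V.character)
    {f f' : G → ℂ} (hf : f ∈ S) (hf' : f' ∈ S) :
    ∑ g : G, f g * f' g⁻¹ = if f = f' then (Fintype.card G : ℂ) else 0 := by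
  obtain ⟨V, hV, rfl⟩ := (hS f).mp hf
  obtain ⟨V', hV', rfl⟩ := (hS f').mp hf'
  by_cases h : V.character = V'.character
  · rw [if_pos h, ← h, ortho V V hV hV, if_pos ⟨Iso.refl V⟩]
  · rw [if_neg h, ortho V V' hV hV', if_neg]
    rintro ⟨i⟩
    exact h (FDRep.char_iso i)

open scoped Classical in
lemma key_identity (g₀ : G) (S : Finset (G → ℂ))
    (hS : ∀ f : G → ℂ, f ∈ S ↔ ∃ V : FDRep ℂ G, Simple V ∧ f = V.character) :
    ∀ g : G, ∑ f ∈ S, f g₀ * f g =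
      if IsConj g₀⁻¹ g then
        (Fintype.card G : ℂ) / ((Finset.univ.filter fun h => IsConj g₀ h).card : ℂ)
      else 0 := by
  classical
  set c1 : ℕ := (Finset.univ.filter fun h => IsConj g₀ h).card with hc1
  have hc1ne : (c1 : ℂ) ≠ 0 := by
    rw [hc1]
    rw [Nat.cast_ne_zero]
    refine Finset.card_ne_zero_of_mem (a := g₀) ?_
    simp only [Finset.mem_filter, Finset.mem_univ, true_and]
    exact IsConj.refl g₀
  set κ : ℂ := (Fintype.card G : ℂ) / (c1 : ℂ) with hκ
  have hclass : ∀ f ∈ S, ∀ (x y : G), f (y * x * y⁻¹) = f x := by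
    intro f hf x y
    obtain ⟨V, hV, rfl⟩ := (hS f).mp hf
    exact FDRep.char_conj V x y
  have hconst : ∀ f ∈ S, ∀ h : G, IsConj g₀ h → f h = f g₀ := by
    intro f hf h hconj
    obtain ⟨c, hc⟩ := isConj_iff.mp hconj
    rw [← hc]
    exact hclass f hf g₀ c
  have hinv2 : ∀ x : G, IsConj g₀⁻¹ x ↔ IsConj g₀ x⁻¹ := by
    intro x
    constructor
    · intro h
      obtain ⟨c, hc⟩ := isConj_iff.mp h
      exact isConj_iff.mpr ⟨c, by rw [← hc]; group⟩
    · intro h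
      obtain ⟨c, hc⟩ := isConj_iff.mp h
      refine isConj_iff.mpr ⟨c, ?_⟩
      have hx : (c * g₀ * c⁻¹)⁻¹ = x := by rw [hc, inv_inv]
      rw [← hx]; group
  set φ : G → ℂ := fun g => (∑ f ∈ S, f g₀ * f g) - (if IsConj g₀⁻¹ g then κ else 0)
    with hφdef
  have hφ0 : φ = 0 := by
    apply completeness
    · intro x y
      simp only [hφdef]
      have hiff : IsConj g₀⁻¹ (y * x * y⁻¹) ↔ IsConj g₀⁻¹ x :=
        ⟨fun h => h.trans (isConj_iff.mpr ⟨y, rfl⟩).symm,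
         fun h => h.trans (isConj_iff.mpr ⟨y, rfl⟩)⟩
      congr 1
      · exact Finset.sum_congr rfl fun f hf => by rw [hclass f hf x y]
      · simp only [hiff]
    · intro V hV
      have hχS : V.character ∈ S := (hS V.character).mpr ⟨V, hV, rfl⟩
      simp only [hφdef, sub_mul]
      rw [Finset.sum_sub_distrib]
      have hA : ∑ g : G, (∑ f ∈ S, f g₀ * f g) * V.character g⁻¹
          = V.character g₀ * (Fintype.card G : ℂ) := by
        have e1 : ∀ g : G, (∑ f ∈ S, f g₀ * f g) * V.character g⁻¹
            = ∑ f ∈ S, f g₀ * (f g * V.character g⁻¹) := by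
          intro g
          rw [Finset.sum_mul]
          exact Finset.sum_congr rfl fun f _ => by ring
        simp only [e1]
        rw [Finset.sum_comm]
        have e2 : ∀ f ∈ S, ∑ g : G, f g₀ * (f g * V.character g⁻¹)
            = if f = V.character then f g₀ * (Fintype.card G : ℂ) else 0 := by
          intro f hf
          rw [← Finset.mul_sum, ortho_fun S hS hf hχS]
          split <;> simp
        rw [Finset.sum_congr rfl e2, Finset.sum_ite_eq' S V.character
          (fun f => f g₀ * (Fintype.card G : ℂ)), if_pos hχS]
      have hB : ∑ g : G, (if IsConj g₀⁻¹ g then κ else 0) * V.character g⁻¹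
          = V.character g₀ * (Fintype.card G : ℂ) := by
        have e1 : ∑ g : G, (if IsConj g₀⁻¹ g then κ else 0) * V.character g⁻¹
            = ∑ g : G, (if IsConj g₀ g then κ * V.character g₀ else 0) := by
          refine Fintype.sum_equiv (Equiv.inv G) _ _ (fun x => ?_)
          simp only [Equiv.inv_apply]
          by_cases h : IsConj g₀⁻¹ x
          · rw [if_pos h, if_pos ((hinv2 x).mp h),
              hconst V.character hχS x⁻¹ ((hinv2 x).mp h)]
          · rw [if_neg h, if_neg (fun hc => h ((hinv2 x).mpr hc))]
            ring
        rw [e1, ← Finset.sum_filter, Finset.sum_const, ← hc1, nsmul_eq_mul, hκ]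
        field_simp
      rw [hA, hB, sub_self]
  intro g
  have h := congrFun hφ0 g
  simp only [hφdef, Pi.zero_apply] at h
  exact sub_eq_zero.mp h
end

open scoped Classical in
/-- Let `G` be a finite group and `C` a conjugacy class of `G` on which every
irreducible complex character takes value `0`, `1` or `-1`; let `S` be the
set of irreducible characters of `G`.  Then `χ⁺`, the sum of the irreducible
characters taking value `1` on `C`, and `χ⁻`, the sum of those taking value
`-1` on `C`, are both characters of `G` (characters of finite-dimensional
representations), and they agree at every element of `G` not in `C`. -/
theorem stmt_0 {G : Type} [Group G] [Fintype G] (g₀ : G) (C : Set G)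
    (hC : C = {h : G | IsConj g₀ h})
    (hsign : ∀ V : FDRep ℂ G, Simple V → ∀ g ∈ C,
      V.character g ∈ ({0, 1, -1} : Set ℂ))
    (S : Finset (G → ℂ))
    (hS : ∀ f : G → ℂ, f ∈ S ↔ ∃ V : FDRep ℂ G, Simple V ∧ f = V.character) :
    (∃ Vp : FDRep ℂ G,
        Vp.character = fun g => ∑ f ∈ S.filter (fun f => f g₀ = 1), f g) ∧
    (∃ Vm : FDRep ℂ G,
        Vm.character = fun g => ∑ f ∈ S.filter (fun f => f g₀ = -1), f g) ∧
    ∀ g ∉ C,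
      ∑ f ∈ S.filter (fun f => f g₀ = 1), f g =
        ∑ f ∈ S.filter (fun f => f g₀ = -1), f g := by
  classical
  have hg₀C : g₀ ∈ C := by rw [hC]; exact IsConj.refl g₀
  have hval : ∀ f ∈ S, f g₀ = 0 ∨ f g₀ = 1 ∨ f g₀ = -1 := by
    intro f hf
    obtain ⟨V, hV, rfl⟩ := (hS f).mp hf
    simpa [Set.mem_insert_iff] using hsign V hV g₀ hg₀C
  refine ⟨?_, ?_, ?_⟩
  · exact char_sum _ (fun f hf => by
      obtain ⟨V, _, hfc⟩ := (hS f).mp (Finset.mem_filter.mp hf).1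
      exact ⟨V, hfc⟩)
  · exact char_sum _ (fun f hf => by
      obtain ⟨V, _, hfc⟩ := (hS f).mp (Finset.mem_filter.mp hf).1
      exact ⟨V, hfc⟩)
  · intro g hg
    have hkey := key_identity g₀ S hS
    have split : ∀ x : G,
        (∑ f ∈ S.filter (fun f => f g₀ = 1), f x)
          - ∑ f ∈ S.filter (fun f => f g₀ = -1), f x = ∑ f ∈ S, f g₀ * f x := by
      intro x
      rw [Finset.sum_filter, Finset.sum_filter, ← Finset.sum_sub_distrib]
      refine Finset.sum_congr rfl fun f hf => ?_
      rcases hval f hf with h|h|h <;> rw [h] <;> norm_num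
    by_cases hall : ∀ f ∈ S, f g₀ = 0
    · rw [Finset.filter_false_of_mem (fun f hf => by rw [hall f hf]; norm_num),
          Finset.filter_false_of_mem (fun f hf => by rw [hall f hf]; norm_num)]
    · push_neg at hall
      obtain ⟨f₁, hf₁S, hf₁⟩ := hall
      have hsum0 : ∑ f ∈ S, f g₀ * f g₀ ≠ 0 := by
        have e : ∑ f ∈ S, f g₀ * f g₀
            = ∑ f ∈ S, (if f g₀ ≠ 0 then (1 : ℂ) else 0) := by
          refine Finset.sum_congr rfl fun f hf => ?_
          rcases hval f hf with h|h|h <;> rw [h] <;> norm_num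
        rw [e, ← Finset.sum_filter, Finset.sum_const, nsmul_eq_mul, mul_one]
        exact_mod_cast Nat.cast_ne_zero.mpr
          (Finset.card_ne_zero_of_mem (Finset.mem_filter.mpr ⟨hf₁S, hf₁⟩))
      have hconj0 : IsConj g₀⁻¹ g₀ := by
        by_contra hcon
        have hk := hkey g₀
        rw [if_neg hcon] at hk
        exact hsum0 hk
      have hng : ¬ IsConj g₀⁻¹ g := by
        intro hcon
        apply hg
        rw [hC]
        exact hconj0.symm.trans hcon
      have hk := hkey g
      rw [if_neg hng] at hk
      exact sub_eq_zero.mp ((split g).trans hk)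
end

section
/- Let a ≥ 2 and α₂ > 2a, and set α := (α₂ + 2a - 1, α₂, a, a-1, 1) with a ≥ 4, n := |α| = 2α₂ + 4a - 1. Then for β := (α₂ + 2a, 3, 1^{α₂+2a-4}), the irreducible character of S_n indexed by β takes the value (-1)^{α₂} · 2 on the conjugacy class with cycle type α. Moreover β is not self-conjugate. -/
/-- The beta-set (set of first-column hook lengths) of a partition given as a
weakly decreasing list of parts. -/
def betaSet (l : List ℕ) : List ℕ :=
  l.zipIdx.map (fun p => p.1 + (l.length - 1 - p.2))

/-- Recover a partition (weakly decreasing list of positive parts) from a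
list of distinct beta-numbers. -/
def fromBeta (b : List ℕ) : List ℕ :=
  let s := List.insertionSort (· ≥ ·) b
  (s.zipIdx.map (fun p => p.1 - (s.length - 1 - p.2))).filter (fun x => x ≠ 0)

/-- `MN β γ` is the value of the irreducible character of the symmetric group
indexed by the partition `β` at the conjugacy class of cycle type `γ`,
computed via the Murnaghan–Nakayama rule (phrased in terms of beta-numbers:
removing a rim hook of length `q` replaces a beta-number `x` by `x - q`,
the sign being `(-1)` to the number of beta-numbers strictly between
`x - q` and `x`, i.e. the leg length of the hook). -/
def MN : List ℕ → List ℕ → ℤ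
  | β, [] => if β = [] then 1 else 0
  | β, q :: γ =>
      ((betaSet β).map (fun x =>
        if q ≤ x ∧ x - q ∉ betaSet β then
          (-1) ^ ((betaSet β).filter (fun y => x - q < y ∧ y < x)).length *
            MN (fromBeta ((x - q) :: (betaSet β).erase x)) γ
        else 0)).sum

/-- `[k, k-1, ..., 1]` -/
def rv (k : ℕ) : List ℕ := ((List.range k).reverse).map (· + 1)

lemma rev_range_succ (n : ℕ) : (List.range (n+1)).reverse = n :: (List.range n).reverse := by
  rw [List.range_succ]; simp

lemma rv_succ (k : ℕ) : rv (k+1) = (k+1) :: rv k := by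
  simp [rv, rev_range_succ]

@[simp] lemma rv_zero : rv 0 = [] := rfl

@[simp] lemma length_rv (k : ℕ) : (rv k).length = k := by simp [rv]

lemma mem_rv {x k : ℕ} : x ∈ rv k ↔ 1 ≤ x ∧ x ≤ k := by
  induction k with
  | zero => simp; omega
  | succ n ih => rw [rv_succ]; simp [ih]; omega

lemma rv_sorted (k : ℕ) : (rv k).Pairwise (· ≥ ·) := by
  induction k with
  | zero => simp
  | succ n ih =>
    rw [rv_succ, List.pairwise_cons]
    exact ⟨fun b hb => by have := mem_rv.1 hb; omega, ih⟩

lemma map_range_rev (n : ℕ) : (List.range n).map (fun i => n - 1 - i) = (List.range n).reverse := by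
  induction n with
  | zero => simp
  | succ m ih =>
    rw [rev_range_succ, List.range_succ_eq_map]
    simp only [List.map_cons, List.map_map]
    refine List.cons_eq_cons.mpr ⟨by omega, ?_⟩
    rw [← ih]; apply List.map_congr_left; intro x hx; simp; omega

lemma enumFrom_map_eq (l : List ℕ) : ∀ (j n : ℕ) (f : ℕ → ℕ → ℕ),
    (List.zipIdx l j).map (fun p => f p.1 (n - p.2)) =
      List.zipWith (fun a i => f a (n - i)) l (List.range' j l.length 1) := by
  induction l with
  | nil => intros; rfl
  | cons a l ih =>
    intro j n f
    rw [List.zipIdx_cons, List.length_cons, List.range'_succ, List.map_cons,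
      List.zipWith_cons_cons, ih]

lemma enum_map_eq_zipWith (l : List ℕ) (f : ℕ → ℕ → ℕ) :
    l.zipIdx.map (fun p => f p.1 (l.length - 1 - p.2)) =
      List.zipWith f l (List.range l.length).reverse := by
  rw [enumFrom_map_eq l 0 (l.length - 1) f, ← List.range_eq_range',
    ← map_range_rev, List.zipWith_map_right]

lemma betaSet_eq (l : List ℕ) :
    betaSet l = List.zipWith (· + ·) l (List.range l.length).reverse :=
  enum_map_eq_zipWith l _

lemma fromBeta_of_sort {b s : List ℕ} (h : List.insertionSort (· ≥ ·) b = s) :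
    fromBeta b =
      (List.zipWith (fun x y => x - y) s (List.range s.length).reverse).filter
        (fun x => x ≠ 0) := by
  simp only [fromBeta]
  rw [h]
  congr 1
  exact enum_map_eq_zipWith s (fun x y => x - y)

-- zipWith helpers
lemma zipWith_add_replicate_one (l : List ℕ) :
    List.zipWith (· + ·) (List.replicate l.length 1) l = l.map (· + 1) := by
  induction l with
  | nil => rfl
  | cons a l ih => simp only [List.length_cons, List.replicate_succ,
      List.zipWith_cons_cons, List.map_cons, ih]; rw [Nat.add_comm]

lemma betaSet_two_rep (c₁ c₂ k : ℕ) :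
    betaSet (c₁ :: c₂ :: List.replicate k 1) = (c₁ + (k+1)) :: (c₂ + k) :: rv k := by
  rw [betaSet_eq]
  simp only [List.length_cons, List.length_replicate]
  rw [rev_range_succ, rev_range_succ, List.zipWith_cons_cons, List.zipWith_cons_cons]
  congr 2
  have h2 := zipWith_add_replicate_one (List.range k).reverse
  rw [List.length_reverse, List.length_range] at h2
  rw [h2]
  rfl

lemma betaSet_single (c : ℕ) : betaSet [c] = [c] := by
  simp [betaSet]

-- rv k ++ [0] = reverse of range (k+1)
lemma rv_append_zero (k : ℕ) : rv k ++ [0] = (List.range (k+1)).reverse := by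
  rw [List.range_succ_eq_map, List.reverse_cons, ← List.map_reverse]
  rfl

lemma zipWith_sub_self (l : List ℕ) :
    List.zipWith (fun x y => x - y) l l = List.replicate l.length 0 := by
  rw [List.zipWith_self]
  simp [List.eq_replicate_iff]

lemma zipWith_sub_rv (k : ℕ) :
    List.zipWith (fun x y => x - y) (rv k) (List.range k).reverse =
      List.replicate k 1 := by
  unfold rv
  rw [List.zipWith_map_left, List.zipWith_self]
  simp [List.eq_replicate_iff]

-- splitting rv
lemma rv_add (u q : ℕ) : rv (q + u) = (rv u).map (· + q) ++ rv q := by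
  induction u with
  | zero => simp
  | succ n ih =>
    have : q + (n + 1) = (q + n) + 1 := by omega
    rw [this, rv_succ, ih, rv_succ, List.map_cons, List.cons_append]
    refine List.cons_eq_cons.mpr ⟨by omega, rfl⟩

lemma rv_erase (u r : ℕ) :
    (rv (r + 1 + u)).erase (r + 1) = (rv u).map (· + (r+1)) ++ rv r := by
  rw [rv_add u (r+1)]
  rw [List.erase_append_right]
  · rw [rv_succ, List.erase_cons_head]
  · intro hmem
    simp only [List.mem_map] at hmem
    obtain ⟨x, hx, hxe⟩ := hmem
    have := mem_rv.1 hx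
    omega

-- sorted facts
lemma sorted_cons_rv {d k : ℕ} (h : k ≤ d) : (d :: rv k).Pairwise (· ≥ ·) := by
  rw [List.pairwise_cons]
  exact ⟨fun b hb => by have := mem_rv.1 hb; omega, rv_sorted k⟩

-- orderedInsert of 0 at end
lemma orderedInsert_zero (l : List ℕ) (h : ∀ x ∈ l, 0 < x) :
    List.orderedInsert (· ≥ ·) 0 l = l ++ [0] := by
  induction l with
  | nil => rfl
  | cons a l ih =>
    have ha : 0 < a := h a (by simp)
    simp only [List.orderedInsert]
    rw [if_neg (by omega), ih (fun x hx => h x (by simp [hx]))]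
    rfl

lemma insertionSort_zero_cons (l : List ℕ) (hs : l.Pairwise (· ≥ ·)) (h : ∀ x ∈ l, 0 < x) :
    List.insertionSort (· ≥ ·) (0 :: l) = l ++ [0] := by
  rw [List.insertionSort_cons, hs.insertionSort_eq, orderedInsert_zero l h]

lemma orderedInsert_ge_rv {y k : ℕ} (h : k ≤ y) :
    List.orderedInsert (· ≥ ·) y (rv k) = y :: rv k := by
  cases k with
  | zero => rfl
  | succ n => rw [rv_succ]; simp only [List.orderedInsert]; rw [if_pos (by omega)]

-- counting / sum lemmas over rv
lemma filter_rv_len (a b : ℕ) : ∀ k : ℕ,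
    ((rv k).filter (fun y => decide (a < y ∧ y < b))).length = min k (b-1) - min k a := by
  intro k
  induction k with
  | zero => simp only [rv_zero, List.filter_nil, List.length_nil]; omega
  | succ n ih =>
    rw [rv_succ, List.filter_cons]
    by_cases h : a < n + 1 ∧ n + 1 < b
    · rw [if_pos (by simpa using h)]
      simp only [List.length_cons, ih]
      omega
    · rw [if_neg (by simpa using h)]
      rw [ih]
      omega

lemma sum_map_rv_zero (f : ℕ → ℤ) : ∀ k : ℕ, (∀ x, 1 ≤ x → x ≤ k → f x = 0) →
    ((rv k).map f).sum = 0 := by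
  intro k
  induction k with
  | zero => simp
  | succ n ih =>
    intro h
    rw [rv_succ, List.map_cons, List.sum_cons, h (n+1) (by omega) (by omega),
      ih (fun x h1 h2 => h x h1 (by omega))]
    simp

lemma sum_map_rv_single (f : ℕ → ℤ) (q : ℕ) (h1 : 1 ≤ q) : ∀ k : ℕ, q ≤ k →
    (∀ x, 1 ≤ x → x ≤ k → x ≠ q → f x = 0) → ((rv k).map f).sum = f q := by
  intro k
  induction k with
  | zero => omega
  | succ n ih =>
    intro hq h
    rw [rv_succ, List.map_cons, List.sum_cons]
    by_cases hqn : q = n + 1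
    · subst hqn
      rw [sum_map_rv_zero f n (fun x hx1 hx2 => h x hx1 (by omega) (by omega))]
      simp
    · rw [h (n+1) (by omega) (by omega) (by omega), ih (by omega)
        (fun x hx1 hx2 hx3 => h x hx1 (by omega) hx3)]
      simp

-- fromBeta computations
lemma fromBeta_A (k : ℕ) :
    fromBeta ((k+2) :: (k+3) :: rv k) = 2 :: 2 :: List.replicate k 1 := by
  have hsort : List.insertionSort (· ≥ ·) ((k+2) :: (k+3) :: rv k) =
      (k+3) :: (k+2) :: rv k := by
    rw [List.insertionSort_cons, List.insertionSort_cons, (rv_sorted k).insertionSort_eq,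
      orderedInsert_ge_rv (by omega : k ≤ k+3)]
    simp only [List.orderedInsert]
    rw [if_neg (by omega), orderedInsert_ge_rv (by omega : k ≤ k+2)]
  rw [fromBeta_of_sort hsort]
  simp only [List.length_cons, length_rv]
  rw [rev_range_succ, rev_range_succ, List.zipWith_cons_cons, List.zipWith_cons_cons,
    zipWith_sub_rv]
  have e1 : k + 3 - (k + 1) = 2 := by omega
  have e2 : k + 2 - k = 2 := by omega
  rw [e1, e2]
  simp [List.filter_replicate]

lemma fromBeta_B {k d : ℕ} (hd : k + 2 ≤ d) :
    fromBeta (0 :: d :: rv k) = [d - (k+1)] := by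
  have hpos : ∀ x ∈ d :: rv k, 0 < x := by
    intro x hx
    rcases List.mem_cons.1 hx with h | h
    · omega
    · exact (mem_rv.1 h).1
  have hsort : List.insertionSort (· ≥ ·) (0 :: d :: rv k) = d :: (rv k ++ [0]) := by
    rw [insertionSort_zero_cons _ (sorted_cons_rv (by omega)) hpos]
    rfl
  rw [fromBeta_of_sort hsort]
  rw [show (d :: (rv k ++ [0])).length = k + 2 from by simp]
  rw [rev_range_succ, List.zipWith_cons_cons, rv_append_zero, zipWith_sub_self]
  simp only [List.length_reverse, List.length_range]
  rw [List.filter_cons, if_pos (by simp; omega)]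
  simp [List.filter_replicate]

lemma fromBeta_single (t : ℕ) : fromBeta [t] = if t = 0 then [] else [t] := by
  have hsort : List.insertionSort (· ≥ ·) [t] = [t] := by
    exact (List.pairwise_singleton _ t).insertionSort_eq
  rw [fromBeta_of_sort hsort]
  rw [show ([t] : List ℕ).length = 1 from rfl, show (List.range 1).reverse = [0] from rfl]
  by_cases h : t = 0
  · subst h; rfl
  · simp [h]

lemma chunk1 (u c : ℕ) :
    List.zipWith (fun x y => x - y) ((rv u).map (· + c))
      (((List.range u).reverse).map (c + ·)) = List.replicate u 1 := by
  unfold rv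
  rw [List.map_map, List.zipWith_map, List.zipWith_self]
  refine List.eq_replicate_iff.mpr ⟨by simp, ?_⟩
  intro b hb
  simp only [List.mem_map, Function.comp] at hb
  obtain ⟨x, _, hx⟩ := hb
  omega

lemma sorted_mid (u r : ℕ) :
    ((rv u).map (· + (r+1)) ++ rv r).Pairwise (· ≥ ·) := by
  rw [List.pairwise_append]
  refine ⟨List.Pairwise.map _ (fun a b h => by omega) (rv_sorted u), rv_sorted r, ?_⟩
  intro a ha b hb
  simp only [List.mem_map] at ha
  obtain ⟨x, hx, hxe⟩ := ha
  have h1 := (mem_rv.1 hx)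
  have h2 := (mem_rv.1 hb)
  omega

lemma mem_mid {x u r : ℕ} (h : x ∈ (rv u).map (· + (r+1)) ++ rv r) :
    1 ≤ x ∧ x ≤ r + 1 + u := by
  rcases List.mem_append.1 h with h | h
  · simp only [List.mem_map] at h
    obtain ⟨y, hy, hye⟩ := h
    have := mem_rv.1 hy
    omega
  · have := mem_rv.1 h
    omega

lemma fromBeta_C (u r : ℕ) :
    fromBeta (0 :: (r+1+u+3) :: (r+1+u+2) :: ((rv u).map (· + (r+1)) ++ rv r)) =
      2 :: 2 :: List.replicate u 1 := by
  set M := (rv u).map (· + (r+1)) ++ rv r with hM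
  have hsortL : ((r+1+u+3) :: (r+1+u+2) :: M).Pairwise (· ≥ ·) := by
    rw [List.pairwise_cons, List.pairwise_cons]
    refine ⟨?_, ?_, sorted_mid u r⟩
    · intro b hb
      rcases List.mem_cons.1 hb with h | h
      · omega
      · have := mem_mid h; omega
    · intro b hb; have := mem_mid hb; omega
  have hpos : ∀ x ∈ (r+1+u+3) :: (r+1+u+2) :: M, 0 < x := by
    intro x hx
    rcases List.mem_cons.1 hx with h | hx
    · omega
    rcases List.mem_cons.1 hx with h | hx
    · omega
    · have := mem_mid hx; omega
  have hsort : List.insertionSort (· ≥ ·)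
      (0 :: (r+1+u+3) :: (r+1+u+2) :: M) =
      (r+1+u+3) :: (r+1+u+2) :: (M ++ [0]) := by
    rw [insertionSort_zero_cons _ hsortL hpos]
    rfl
  rw [fromBeta_of_sort hsort]
  have hlen : ((r+1+u+3) :: (r+1+u+2) :: (M ++ [0])).length = (r+1+u) + 2 := by
    simp [hM]; omega
  rw [hlen, rev_range_succ, rev_range_succ, List.zipWith_cons_cons, List.zipWith_cons_cons]
  have e1 : r+1+u+3 - (r+1+u+1) = 2 := by omega
  have e2 : r+1+u+2 - (r+1+u) = 2 := by omega
  rw [e1, e2]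
  have hz : List.zipWith (fun x y => x - y) (M ++ [0]) (List.range (r+1+u)).reverse =
      List.replicate u 1 ++ List.replicate (r+1) 0 := by
    rw [hM, List.append_assoc, List.range_add, List.reverse_append, ← List.map_reverse,
      List.zipWith_append (by simp), chunk1, rv_append_zero, zipWith_sub_self]
    simp
  rw [hz]
  simp [List.filter_append, List.filter_replicate]

lemma Lrow : ∀ (γ : List ℕ) (s : ℕ), 0 < s → (∀ q ∈ γ, 0 < q) → γ.sum = s →
    MN [s] γ = 1 := by
  intro γ
  induction γ with
  | nil => intro s hs _ hsum; simp at hsum; omega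
  | cons q δ ih =>
    intro s hs hpos hsum
    have hq : 0 < q := hpos q (by simp)
    have hqs : q ≤ s := by
      rw [List.sum_cons] at hsum; omega
    rw [MN, betaSet_single, List.map_cons, List.map_nil, List.sum_cons, List.sum_nil, add_zero]
    rw [if_pos ⟨hqs, by simp; omega⟩]
    rw [List.filter_cons, if_neg (by simp), List.filter_nil, List.length_nil,
      pow_zero, one_mul, List.erase_cons_head, fromBeta_single]
    by_cases h0 : s - q = 0
    · rw [if_pos h0]
      have hγ : δ = [] := by
        cases δ with
        | nil => rfl
        | cons a t =>
          exfalso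
          have := hpos a (by simp)
          rw [List.sum_cons, List.sum_cons] at hsum
          omega
      subst hγ
      rw [MN]
      simp
    · rw [if_neg h0, List.sum_cons] at *
      exact ih (s - q) (by omega) (fun x hx => hpos x (by simp [hx])) (by omega)

lemma L0 (k : ℕ) (γ : List ℕ) :
    MN ((k+4) :: 3 :: List.replicate k 1) ((k+3) :: γ) =
      -(MN (2 :: 2 :: List.replicate k 1) γ) + (-1)^k * MN [k+4] γ := by
  rw [MN, betaSet_two_rep]
  simp only [List.map_cons, List.sum_cons]
  simp only [show k+4+(k+1) = 2*k+5 from by ring, show (3:ℕ)+k = k+3 from by ring,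
    show 2*k+5-(k+3) = k+2 from by omega, show k+3-(k+3) = 0 from by omega]
  rw [if_pos ⟨by omega, by simp [mem_rv]; omega⟩]
  rw [if_pos ⟨by omega, by simp [mem_rv]⟩]
  rw [List.erase_cons_head]
  rw [List.erase_cons_tail (by simp; omega), List.erase_cons_head]
  rw [fromBeta_A, fromBeta_B (by omega)]
  simp only [show 2*k+5-(k+1) = k+4 from by omega]
  rw [List.filter_cons, if_neg (by simp only [decide_eq_true_eq]; omega),
    List.filter_cons, if_pos (by simp only [decide_eq_true_eq]; omega),
    List.length_cons, filter_rv_len]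
  rw [List.filter_cons, if_neg (by simp only [decide_eq_true_eq]; omega),
    List.filter_cons, if_neg (by simp only [decide_eq_true_eq]; omega),
    filter_rv_len]
  rw [sum_map_rv_zero _ k (fun x h1 h2 => by
    rw [if_neg (fun hc => absurd hc.1 (by omega))])]
  rw [show min k (2*k+5-1) - min k (k+2) + 1 = 1 from by omega,
    show min k (k+3-1) - min k 0 = k from by omega]
  ring

lemma L1 (u r : ℕ) (hr : 2 ≤ r) (γ : List ℕ) :
    MN (2 :: 2 :: List.replicate (r+1+u) 1) ((r+1) :: γ) =
      (-1)^r * MN (2 :: 2 :: List.replicate u 1) γ := by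
  rw [MN, betaSet_two_rep]
  simp only [List.map_cons, List.sum_cons]
  simp only [show 2+(r+1+u+1) = r+1+u+3 from by ring, show 2+(r+1+u) = r+1+u+2 from by ring,
    show r+1+u+3-(r+1) = u+3 from by omega, show r+1+u+2-(r+1) = u+2 from by omega]
  rw [if_neg (by simp [mem_rv]; omega)]
  rw [if_neg (by simp [mem_rv]; omega)]
  rw [sum_map_rv_single _ (r+1) (by omega) (r+1+u) (by omega) (by
    intro x hx1 hx2 hx3
    rw [if_neg]
    intro hc
    exact hc.2 (by simp [mem_rv]; omega))]
  simp only [show r+1-(r+1) = 0 from by omega]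
  rw [if_pos ⟨le_refl _, by simp [mem_rv]⟩]
  rw [List.erase_cons_tail (by simp; omega), List.erase_cons_tail (by simp; omega),
    rv_erase, fromBeta_C]
  rw [List.filter_cons, if_neg (by simp only [decide_eq_true_eq]; omega),
    List.filter_cons, if_neg (by simp only [decide_eq_true_eq]; omega),
    filter_rv_len]
  rw [show min (r+1+u) (r+1-1) - min (r+1+u) 0 = r from by omega]
  ring

lemma L2 (k : ℕ) (γ : List ℕ) :
    MN (2 :: 2 :: List.replicate k 1) ((k+3) :: γ) = (-1)^(k+1) * MN [1] γ := by
  rw [MN, betaSet_two_rep]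
  simp only [List.map_cons, List.sum_cons]
  simp only [show 2+(k+1) = k+3 from by ring, show (2:ℕ)+k = k+2 from by ring,
    show k+3-(k+3) = 0 from by omega]
  rw [if_pos ⟨le_refl _, by simp [mem_rv]⟩]
  rw [if_neg (fun hc => absurd hc.1 (by omega))]
  rw [List.erase_cons_head, fromBeta_B (by omega)]
  simp only [show k+2-(k+1) = 1 from by omega]
  rw [List.filter_cons, if_neg (by simp only [decide_eq_true_eq]; omega),
    List.filter_cons, if_pos (by simp only [decide_eq_true_eq]; omega),
    List.length_cons, filter_rv_len]
  rw [sum_map_rv_zero _ k (fun x h1 h2 => by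
    rw [if_neg (fun hc => absurd hc.1 (by omega))])]
  rw [show min k (k+3-1) - min k 0 + 1 = k+1 from by omega]
  ring

/-- `l` is a partition of `m`: a weakly decreasing list of positive parts
summing to `m`. -/
def IsPartition (l : List ℕ) (m : ℕ) : Prop :=
  l.Pairwise (· ≥ ·) ∧ (∀ i ∈ l, 0 < i) ∧ l.sum = m

/-- The conjugate (transpose) partition: `(conjugate l)_i = #{j : l_j > i}`. -/
def conjugate (l : List ℕ) : List ℕ :=
  (List.range (l.foldr max 0)).map (fun i => (l.filter (fun p => i < p)).length)

lemma hp_pow (n m : ℕ) : (-1 : ℤ)^(2*n+m) = (-1)^m := by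
  rw [pow_add, pow_mul]; norm_num

lemma foldr_max_rep : ∀ n : ℕ, List.foldr max 0 (List.replicate n 1) ≤ 1 := by
  intro n
  induction n with
  | zero => simp
  | succ m ih => rw [List.replicate_succ, List.foldr_cons]; omega

/-- Let `a ≥ 4` (in particular `a ≥ 2`) and `α₂ > 2a`, and set
`α = (α₂+2a-1, α₂, a, a-1, 1)`. Then for `β = (α₂+2a, 3, 1^{α₂+2a-4})` the
irreducible character of `S_n` indexed by `β` takes the value `(-1)^{α₂}·2`
at the class of cycle type `α`, and `β` is not self-conjugate. -/
theorem stmt_4 (a α₂ : ℕ) (ha2 : 2 ≤ a) (ha : 4 ≤ a) (hα₂ : 2 * a < α₂) :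
    MN ((α₂ + 2 * a) :: 3 :: List.replicate (α₂ + 2 * a - 4) 1)
        [α₂ + 2 * a - 1, α₂, a, a - 1, 1] = (-1) ^ α₂ * 2 ∧
    conjugate ((α₂ + 2 * a) :: 3 :: List.replicate (α₂ + 2 * a - 4) 1) ≠
      (α₂ + 2 * a) :: 3 :: List.replicate (α₂ + 2 * a - 4) 1 := by
  obtain ⟨b, rfl⟩ : ∃ b, a = b + 4 := ⟨a - 4, by omega⟩
  obtain ⟨c, rfl⟩ : ∃ c, α₂ = 2*b + 9 + c := ⟨α₂ - (2*b + 9), by omega⟩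
  rw [show 2*b+9+c + 2*(b+4) = (4*b+c+13)+4 from by ring]
  simp only [show (4*b+c+13)+4-4 = 4*b+c+13 from by omega,
    show (4*b+c+13)+4-1 = (4*b+c+13)+3 from by omega,
    show b+4-1 = b+3 from by omega]
  constructor
  · rw [L0]
    have h1 := L1 (2*b+4) (2*b+8+c) (by omega) [b+4, b+3, 1]
    rw [show (2*b+8+c)+1+(2*b+4) = 4*b+c+13 from by ring,
      show (2*b+8+c)+1 = 2*b+9+c from by ring] at h1
    rw [h1]
    have h2 := L1 b (b+3) (by omega) [b+3, 1]
    rw [show (b+3)+1+b = 2*b+4 from by ring, show (b+3)+1 = b+4 from by ring] at h2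
    rw [h2, L2]
    rw [Lrow [1] 1 (by omega) (by intro q hq; simp at hq; omega) (by simp)]
    rw [Lrow [2*b+9+c, b+4, b+3, 1] (4*b+c+13+4) (by omega)
      (by intro q hq; simp at hq; omega) (by simp; omega)]
    have key : ((-1 : ℤ))^(2*b+8+c) * ((-1)^(b+3) * ((-1)^(b+1) * 1)) = (-1)^c := by
      rw [mul_one, ← pow_add, ← pow_add,
        show 2*b+8+c + (b+3 + (b+1)) = 2*(2*b+6)+c from by ring, hp_pow]
    have key2 : ((-1 : ℤ))^(4*b+c+13) = -(-1)^c := by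
      rw [show 4*b+c+13 = 2*(2*b+6)+(c+1) from by ring, hp_pow, pow_succ]; ring
    have key3 : ((-1 : ℤ))^(2*b+9+c) = -(-1)^c := by
      rw [show 2*b+9+c = 2*(b+4)+(c+1) from by ring, hp_pow, pow_succ]; ring
    rw [key, key2, key3]
    ring
  · intro h
    have hlen := congrArg List.length h
    have hrep := foldr_max_rep (4*b+c+13)
    have hfold : List.foldr max 0
        (((4*b+c+13)+4) :: 3 :: List.replicate (4*b+c+13) 1) = (4*b+c+13)+4 := by
      simp only [List.foldr_cons]
      omega
    simp only [conjugate] at hlen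
    rw [hfold] at hlen
    simp only [List.length_map, List.length_range, List.length_cons,
      List.length_replicate] at hlen
    omega
end

section
/- For a ≥ 7, the value of the irreducible character of S_{2a+4} indexed by β = (a, 4, 3, 1^{a-3}) at the conjugacy class of cycle type (a, a-1, 4, 1) equals 0. -/
-- helpers

def run : ℕ → List ℕ
  | 0 => []
  | k+1 => (k+1) :: run k

@[simp] lemma run_length (k : ℕ) : (run k).length = k := by
  induction k with
  | zero => rfl
  | succ n ih => simp [run, ih]

lemma mem_run {x k : ℕ} : x ∈ run k ↔ 1 ≤ x ∧ x ≤ k := by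
  induction k with
  | zero => simp [run]; omega
  | succ n ih => simp [run, ih]; omega

lemma betaSet_cons (x : ℕ) (l : List ℕ) :
    betaSet (x :: l) = (x + l.length) :: betaSet l := by
  simp only [betaSet, List.zipIdx_cons, List.zipIdx_succ, List.map_cons, List.map_map]
  congr 1
  apply List.map_congr_left
  rintro ⟨v, i⟩ _
  simp [Prod.map]
  omega

lemma betaSet_nil : betaSet [] = [] := by simp [betaSet]

lemma betaSet_replicate (k : ℕ) : betaSet (List.replicate k 1) = run k := by
  induction k with
  | zero => simp [betaSet, run]
  | succ n ih =>
    rw [List.replicate_succ, betaSet_cons, List.length_replicate, ih]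
    simp [run]; omega

def G (s : List ℕ) : List ℕ :=
  s.zipIdx.map (fun p => p.1 - (s.length - 1 - p.2))

lemma G_cons (x : ℕ) (s : List ℕ) : G (x :: s) = (x - s.length) :: G s := by
  simp only [G, List.zipIdx_cons, List.zipIdx_succ, List.map_cons, List.map_map]
  congr 1
  apply List.map_congr_left
  rintro ⟨v, i⟩ _
  simp [Prod.map]
  omega

lemma G_run (k : ℕ) : G (run k) = List.replicate k 1 := by
  induction k with
  | zero => simp [G, run]
  | succ n ih =>
    rw [run, G_cons, run_length, ih, List.replicate_succ]
    congr 1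
    omega

lemma G_run_append (k : ℕ) : G (run k ++ [0]) = List.replicate (k+1) 0 := by
  induction k with
  | zero => simp [G, run]
  | succ n ih =>
    have : run (n+1) ++ [0] = (n+1) :: (run n ++ [0]) := by simp [run]
    rw [this, G_cons, ih, List.replicate_succ]
    congr 1
    simp

lemma sorted_run (k : ℕ) : (run k).Pairwise (· ≥ ·) := by
  induction k with
  | zero => simp [run]
  | succ n ih =>
    rw [run, List.pairwise_cons]
    exact ⟨fun b hb => by have := mem_run.mp hb; omega, ih⟩

lemma sorted_run_append (k : ℕ) : (run k ++ [0]).Pairwise (· ≥ ·) := by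
  induction k with
  | zero => simp [run]
  | succ n ih =>
    have : run (n+1) ++ [0] = (n+1) :: (run n ++ [0]) := by simp [run]
    rw [this, List.pairwise_cons]
    refine ⟨fun b hb => ?_, ih⟩
    rcases List.mem_append.mp hb with h | h
    · have := mem_run.mp h; omega
    · simp at h; omega

lemma fromBeta_eq_of_perm (bl s : List ℕ) (hperm : bl.Perm s) (hs : s.Pairwise (· ≥ ·)) :
    fromBeta bl = (G s).filter (fun x => x ≠ 0) := by
  unfold fromBeta G
  rw [List.Perm.eq_of_pairwise' (List.pairwise_insertionSort _ bl) hs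
    ((List.perm_insertionSort _ bl).trans hperm)]

def F (q : ℕ) (γ : List ℕ) (L : List ℕ) (x : ℕ) : ℤ :=
  if q ≤ x ∧ x - q ∉ L then
    (-1) ^ (L.filter (fun y => x - q < y ∧ y < x)).length *
      MN (fromBeta ((x - q) :: L.erase x)) γ
  else 0

lemma MN_cons (β : List ℕ) (q : ℕ) (γ : List ℕ) :
    MN β (q :: γ) = ((betaSet β).map (F q γ (betaSet β))).sum := rfl

lemma F_pos {q x : ℕ} {γ L : List ℕ} (h1 : q ≤ x) (h2 : x - q ∉ L) :
    F q γ L x = (-1) ^ (L.filter (fun y => x - q < y ∧ y < x)).length *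
      MN (fromBeta ((x - q) :: L.erase x)) γ := by
  simp only [F]; rw [if_pos ⟨h1, h2⟩]

lemma F_neg {q x : ℕ} {γ L : List ℕ} (h : ¬(q ≤ x ∧ x - q ∉ L)) : F q γ L x = 0 := by
  simp only [F]; rw [if_neg h]

lemma run_sum_F {q k : ℕ} (γ L : List ℕ) (hk : k < q) :
    ((run k).map (F q γ L)).sum = 0 := by
  apply List.sum_eq_zero
  intro z hz
  rw [List.mem_map] at hz
  obtain ⟨x, hx, rfl⟩ := hz
  exact F_neg (by intro h; have := (mem_run.mp hx).2; omega)

lemma filter_run_nil (k c x : ℕ) (hc : k ≤ c) :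
    (run k).filter (fun y => c < y ∧ y < x) = [] := by
  rw [List.filter_eq_nil_iff]
  intro a ha
  have := mem_run.mp ha
  simp only [decide_eq_true_eq]
  omega

lemma filter_run_self (k c x : ℕ) (hc : c = 0) (hx : k < x) :
    (run k).filter (fun y => c < y ∧ y < x) = run k := by
  rw [List.filter_eq_self]
  intro a ha
  have := mem_run.mp ha
  simp only [decide_eq_true_eq]
  omega

lemma G_cons3_run (x y z k : ℕ) :
    G (x :: y :: z :: run k) = (x - (k+2)) :: (y - (k+1)) :: (z - k) :: List.replicate k 1 := by
  rw [G_cons, G_cons, G_cons, G_run]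
  simp only [List.length_cons, run_length, List.cons.injEq]

lemma G_cons2_run_append (x y k : ℕ) :
    G (x :: y :: (run k ++ [0])) = (x - (k+2)) :: (y - (k+1)) :: List.replicate (k+1) 0 := by
  rw [G_cons, G_cons, G_run_append]
  simp only [List.length_cons, List.length_append, run_length, List.length_nil,
    List.cons.injEq]

lemma filter_replicate_one (k : ℕ) :
    (List.replicate k (1:ℕ)).filter (fun x => x ≠ 0) = List.replicate k 1 := by
  rw [List.filter_eq_self]
  intro a ha
  rw [List.mem_replicate] at ha
  simp [ha.2]

lemma filter_replicate_zero (k : ℕ) :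
    (List.replicate k (0:ℕ)).filter (fun x => x ≠ 0) = [] := by
  rw [List.filter_eq_nil_iff]
  intro a ha
  rw [List.mem_replicate] at ha
  simp [ha.2]

lemma erase_cons_of_ne {a c : ℕ} (l : List ℕ) (h : c ≠ a) :
    (c :: l).erase a = c :: l.erase a := List.erase_cons_tail (by simp [h])

lemma MN_P2 (b : ℕ) : MN [b+7, 4] [b+6, 4, 1] = -MN [3, 2] [4, 1] := by
  have hB : betaSet [b+7, 4] = [b+8, 4] := by
    rw [show ([b+7, 4] : List ℕ) = (b+7) :: 4 :: ([] : List ℕ) from rfl,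
      betaSet_cons, betaSet_cons, betaSet_nil]
    simp
  rw [MN_cons, hB, List.map_cons, List.map_cons, List.map_nil,
    List.sum_cons, List.sum_cons, List.sum_nil]
  have h2 : F (b+6) [4, 1] [b+8, 4] 4 = 0 := F_neg (by intro h; have := h.1; omega)
  rw [h2, F_pos (show b+6 ≤ b+8 by omega)
    (show b+8 - (b+6) ∉ ([b+8, 4] : List ℕ) by simp only [List.mem_cons, List.not_mem_nil, or_false]; omega)]
  rw [show b+8 - (b+6) = 2 from by omega]
  simp only [List.filter_cons, List.filter_nil, decide_eq_true_eq]
  rw [if_neg (show ¬(2 < b+8 ∧ b+8 < b+8) by omega),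
    if_pos (show 2 < 4 ∧ 4 < b+8 by omega), List.erase_cons_head]
  have hfb : fromBeta (2 :: [4]) = [3, 2] := by simp [fromBeta, List.insertionSort, List.orderedInsert]
  rw [hfb]
  simp only [List.length_cons, List.length_nil]
  ring

lemma not_mem_cons3_run {v x y z k : ℕ} (hx : v ≠ x) (hy : v ≠ y) (hz : v ≠ z) (hk : k < v ∨ v = 0) :
    v ∉ x :: y :: z :: run k := by
  simp only [List.mem_cons, mem_run, not_or]
  refine ⟨hx, hy, hz, by omega⟩

lemma MN_P1 (b : ℕ) :
    MN (3 :: 2 :: 2 :: List.replicate (b+4) 1) [b+6, 4, 1]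
      = (-1) ^ (b+4) * MN [3, 2] [4, 1] := by
  have hB : betaSet (3 :: 2 :: 2 :: List.replicate (b+4) 1)
      = (b+9) :: (b+7) :: (b+6) :: run (b+4) := by
    rw [betaSet_cons, betaSet_cons, betaSet_cons, betaSet_replicate]
    simp only [List.length_cons, List.length_replicate, List.cons.injEq]
    refine ⟨by omega, by omega, by omega, trivial⟩
  rw [MN_cons, hB, List.map_cons, List.map_cons, List.map_cons,
    List.sum_cons, List.sum_cons, List.sum_cons, run_sum_F _ _ (show b+4 < b+6 by omega)]
  have h1 : F (b+6) [4, 1] ((b+9) :: (b+7) :: (b+6) :: run (b+4)) (b+9) = 0 := by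
    apply F_neg
    intro h
    exact h.2 (by simp only [List.mem_cons, mem_run]; omega)
  have h2 : F (b+6) [4, 1] ((b+9) :: (b+7) :: (b+6) :: run (b+4)) (b+7) = 0 := by
    apply F_neg
    intro h
    exact h.2 (by simp only [List.mem_cons, mem_run]; omega)
  rw [h1, h2, F_pos (show b+6 ≤ b+6 by omega)
    (not_mem_cons3_run (by omega) (by omega) (by omega) (by omega))]
  rw [show b+6 - (b+6) = 0 from by omega]
  simp only [List.filter_cons, decide_eq_true_eq]
  rw [if_neg (show ¬(0 < b+9 ∧ b+9 < b+6) by omega),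
    if_neg (show ¬(0 < b+7 ∧ b+7 < b+6) by omega),
    if_neg (show ¬(0 < b+6 ∧ b+6 < b+6) by omega),
    filter_run_self (b+4) 0 (b+6) rfl (by omega), run_length,
    erase_cons_of_ne _ (show b+9 ≠ b+6 by omega),
    erase_cons_of_ne _ (show b+7 ≠ b+6 by omega), List.erase_cons_head]
  have hp : ((0:ℕ) :: (b+9) :: (b+7) :: run (b+4)).Perm
      ((b+9) :: (b+7) :: (run (b+4) ++ [0])) := by
    refine (List.Perm.swap (b+9) 0 _).trans (List.Perm.cons (b+9) ?_)
    exact (List.Perm.swap (b+7) 0 _).trans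
      (List.Perm.cons (b+7) (List.perm_append_singleton 0 (run (b+4))).symm)
  have hs : ((b+9) :: (b+7) :: (run (b+4) ++ [0])).Pairwise (· ≥ ·) := by
    rw [List.pairwise_cons, List.pairwise_cons]
    refine ⟨?_, ?_, sorted_run_append _⟩ <;>
      · intro y hy
        simp only [List.mem_cons, List.mem_append, mem_run, List.mem_singleton,
          List.mem_nil_iff, or_false] at hy
        omega
  rw [fromBeta_eq_of_perm _ _ hp hs, G_cons2_run_append,
    show b+9 - (b+4+2) = 3 from by omega, show b+7 - (b+4+1) = 2 from by omega]
  simp only [List.filter_cons, decide_eq_true_eq]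
  rw [if_pos (show (3:ℕ) ≠ 0 by omega), if_pos (show (2:ℕ) ≠ 0 by omega),
    filter_replicate_zero]
  ring


/-- For `a ≥ 7`, the irreducible character of `S_{2a+4}` indexed by
`β = (a, 4, 3, 1^{a-3})` vanishes at the class of cycle type `(a, a-1, 4, 1)`. -/
theorem stmt_11 (a : ℕ) (ha : 7 ≤ a) :
    MN (a :: 4 :: 3 :: List.replicate (a - 3) 1) [a, a - 1, 4, 1] = 0 := by
  obtain ⟨b, rfl⟩ : ∃ b, a = b + 7 := ⟨a - 7, by omega⟩
  rw [show b + 7 - 3 = b + 4 from by omega, show b + 7 - 1 = b + 6 from by omega]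
  have hB : betaSet ((b+7) :: 4 :: 3 :: List.replicate (b+4) 1)
      = (2*b+13) :: (b+9) :: (b+7) :: run (b+4) := by
    rw [betaSet_cons, betaSet_cons, betaSet_cons, betaSet_replicate]
    simp only [List.length_cons, List.length_replicate, List.cons.injEq]
    refine ⟨by omega, by omega, by omega, trivial⟩
  rw [MN_cons, hB, List.map_cons, List.map_cons, List.map_cons,
    List.sum_cons, List.sum_cons, List.sum_cons,
    run_sum_F _ _ (show b+4 < b+7 by omega)]
  have h2 : F (b+7) [b+6, 4, 1] ((2*b+13) :: (b+9) :: (b+7) :: run (b+4)) (b+9) = 0 := by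
    apply F_neg
    intro h
    exact h.2 (by simp only [List.mem_cons, mem_run]; omega)
  rw [h2]
  -- term 1 : x = 2b+13
  rw [F_pos (show b+7 ≤ 2*b+13 by omega)
    (not_mem_cons3_run (by omega) (by omega) (by omega) (by omega)),
    show 2*b+13 - (b+7) = b+6 from by omega]
  -- term 3 : x = b+7
  rw [F_pos (show b+7 ≤ b+7 by omega)
    (not_mem_cons3_run (by omega) (by omega) (by omega) (by omega)),
    show b+7 - (b+7) = 0 from by omega]
  simp only [List.filter_cons, decide_eq_true_eq]
  rw [if_neg (show ¬(b+6 < 2*b+13 ∧ 2*b+13 < 2*b+13) by omega),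
    if_pos (show b+6 < b+9 ∧ b+9 < 2*b+13 by omega),
    if_pos (show b+6 < b+7 ∧ b+7 < 2*b+13 by omega),
    filter_run_nil (b+4) (b+6) (2*b+13) (by omega),
    if_neg (show ¬(0 < 2*b+13 ∧ 2*b+13 < b+7) by omega),
    if_neg (show ¬(0 < b+9 ∧ b+9 < b+7) by omega),
    if_neg (show ¬(0 < b+7 ∧ b+7 < b+7) by omega),
    filter_run_self (b+4) 0 (b+7) rfl (by omega), run_length,
    List.erase_cons_head,
    erase_cons_of_ne _ (show 2*b+13 ≠ b+7 by omega),
    erase_cons_of_ne _ (show b+9 ≠ b+7 by omega), List.erase_cons_head]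
  -- fromBeta for term 1
  have hp1 : ((b+6) :: (b+9) :: (b+7) :: run (b+4)).Perm
      ((b+9) :: (b+7) :: (b+6) :: run (b+4)) :=
    (List.Perm.swap (b+9) (b+6) _).trans
      (List.Perm.cons (b+9) (List.Perm.swap (b+7) (b+6) _))
  have hs1 : ((b+9) :: (b+7) :: (b+6) :: run (b+4)).Pairwise (· ≥ ·) := by
    rw [List.pairwise_cons, List.pairwise_cons, List.pairwise_cons]
    refine ⟨?_, ?_, ?_, sorted_run _⟩ <;>
      · intro y hy
        simp only [List.mem_cons, mem_run] at hy
        omega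
  rw [fromBeta_eq_of_perm _ _ hp1 hs1, G_cons3_run,
    show b+9 - (b+4+2) = 3 from by omega, show b+7 - (b+4+1) = 2 from by omega,
    show b+6 - (b+4) = 2 from by omega]
  -- fromBeta for term 3
  have hp3 : ((0:ℕ) :: (2*b+13) :: (b+9) :: run (b+4)).Perm
      ((2*b+13) :: (b+9) :: (run (b+4) ++ [0])) := by
    refine (List.Perm.swap (2*b+13) 0 _).trans (List.Perm.cons (2*b+13) ?_)
    exact (List.Perm.swap (b+9) 0 _).trans
      (List.Perm.cons (b+9) (List.perm_append_singleton 0 (run (b+4))).symm)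
  have hs3 : ((2*b+13) :: (b+9) :: (run (b+4) ++ [0])).Pairwise (· ≥ ·) := by
    rw [List.pairwise_cons, List.pairwise_cons]
    refine ⟨?_, ?_, sorted_run_append _⟩ <;>
      · intro y hy
        simp only [List.mem_cons, List.mem_append, mem_run, List.mem_singleton,
          List.mem_nil_iff, or_false] at hy
        omega
  rw [fromBeta_eq_of_perm _ _ hp3 hs3, G_cons2_run_append,
    show 2*b+13 - (b+4+2) = b+7 from by omega, show b+9 - (b+4+1) = 4 from by omega]
  simp only [List.filter_cons, decide_eq_true_eq]
  rw [if_pos (show (3:ℕ) ≠ 0 by omega), if_pos (show (2:ℕ) ≠ 0 by omega),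
    if_pos (show (2:ℕ) ≠ 0 by omega), filter_replicate_one,
    if_pos (show b+7 ≠ 0 by omega), if_pos (show (4:ℕ) ≠ 0 by omega),
    filter_replicate_zero, MN_P1, MN_P2]
  simp only [List.length_cons, List.length_nil]
  ring
end

section
/- For a ≥ 8, the values of the irreducible characters of S_{2a+1} indexed by (a+1, a-2, 1, 1) and by (a+1, 5, 1^{a-5}) at the conjugacy class of cycle type (a, a-3, 2, 1, 1) both equal 0. -/
lemma sort_eq {L S : List ℕ} (hp : L.Perm S) (hs : S.Pairwise (· ≥ ·)) :
    List.insertionSort (· ≥ ·) L = S :=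
  ((List.perm_insertionSort _ L).trans hp).eq_of_pairwise'
    (List.pairwise_insertionSort _ L) hs

lemma fromBeta_eq {L S : List ℕ} (hp : L.Perm S) (hs : S.Pairwise (· ≥ ·)) :
    fromBeta L = (S.zipIdx.map (fun p => p.1 - (S.length - 1 - p.2))).filter (fun x => x ≠ 0) := by
  unfold fromBeta
  rw [sort_eq hp hs]

lemma hA (a : ℕ) (ha : 8 ≤ a) : MN [a+1] [a-3,2,1,1] = 1 := by
  have hb : betaSet [a+1] = [a+1] := by
    show [a+1+0] = _
    rw [Nat.add_zero]
  rw [MN, hb]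
  simp only [List.map_cons, List.map_nil, List.sum_cons, List.sum_nil, add_zero]
  rw [if_pos (by simp only [List.mem_singleton]; omega)]
  have e : a + 1 - (a - 3) = 4 := by omega
  rw [e]
  have hf : List.filter (fun y => decide (4 < y ∧ y < a + 1)) [a+1] = [] := by
    simp only [List.filter_cons, List.filter_nil, decide_eq_true_eq]
    rw [if_neg (by omega)]
  rw [hf, List.erase_cons_head]
  have h4 : fromBeta [4] = [4] := by decide
  rw [h4]
  have : MN [4] [2,1,1] = 1 := by decide
  rw [this]
  norm_num

lemma hB (a : ℕ) (ha : 8 ≤ a) : MN [a-3,2,1,1] [a-3,2,1,1] = 1 := by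
  have hb : betaSet [a-3,2,1,1] = [a,4,2,1] := by
    show [a-3+3, 2+2, 1+1, 1+0] = _
    have e1 : a - 3 + 3 = a := by omega
    rw [e1]
  rw [MN, hb]
  simp only [List.map_cons, List.map_nil, List.sum_cons, List.sum_nil, add_zero]
  rw [if_pos (by refine ⟨by omega, ?_⟩; simp only [List.mem_cons, List.mem_singleton, List.mem_nil_iff, or_false]; omega)]
  rw [if_neg (by rintro ⟨h1, -⟩; omega)]
  rw [if_neg (by rintro ⟨h1, -⟩; omega)]
  rw [if_neg (by rintro ⟨h1, -⟩; omega)]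
  have e : a - (a - 3) = 3 := by omega
  rw [e]
  have hf : List.filter (fun y => decide (3 < y ∧ y < a)) [a,4,2,1] = [4] := by
    simp only [List.filter_cons, List.filter_nil, decide_eq_true_eq]
    rw [if_neg (by omega), if_pos (by omega), if_neg (by omega), if_neg (by omega)]
  rw [hf, List.erase_cons_head]
  have h4 : fromBeta (3 :: [4,2,1]) = [1,1,1,1] := by decide
  rw [h4]
  have : MN [1,1,1,1] [2,1,1] = -1 := by decide
  rw [this]
  norm_num

lemma hMain1 (a : ℕ) (ha : 8 ≤ a) : MN [a+1, a-2, 1, 1] [a, a-3, 2, 1, 1] = 0 := by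
  have hb : betaSet [a+1, a-2, 1, 1] = [a+4, a, 2, 1] := by
    show [a+1+3, a-2+2, 1+1, 1+0] = _
    have e1 : a + 1 + 3 = a + 4 := by omega
    have e2 : a - 2 + 2 = a := by omega
    rw [e1, e2]
  rw [MN, hb]
  simp only [List.map_cons, List.map_nil, List.sum_cons, List.sum_nil, add_zero]
  rw [if_pos (by refine ⟨by omega, ?_⟩; simp only [List.mem_cons, List.mem_singleton, List.mem_nil_iff, or_false]; omega)]
  rw [if_pos (by refine ⟨by omega, ?_⟩; simp only [List.mem_cons, List.mem_singleton, List.mem_nil_iff, or_false]; omega)]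
  rw [if_neg (by rintro ⟨h1, -⟩; omega)]
  rw [if_neg (by rintro ⟨h1, -⟩; omega)]
  have e1 : a + 4 - a = 4 := by omega
  have e2 : a - a = 0 := by omega
  rw [e1, e2]
  have hf1 : List.filter (fun y => decide (4 < y ∧ y < a + 4)) [a+4,a,2,1] = [a] := by
    simp only [List.filter_cons, List.filter_nil, decide_eq_true_eq]
    rw [if_neg (by omega), if_pos (by omega), if_neg (by omega), if_neg (by omega)]
  have hf2 : List.filter (fun y => decide (0 < y ∧ y < a)) [a+4,a,2,1] = [2,1] := by
    simp only [List.filter_cons, List.filter_nil, decide_eq_true_eq]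
    rw [if_neg (by omega), if_neg (by omega), if_pos (by omega), if_pos (by omega)]
  rw [hf1, hf2, List.erase_cons_head,
    List.erase_cons_tail (by simp only [beq_iff_eq]; omega), List.erase_cons_head]
  have hfb1 : fromBeta (4 :: [a,2,1]) = [a-3,2,1,1] := by
    rw [fromBeta_eq (List.Perm.swap a 4 [2,1]) (by simp [List.pairwise_cons] <;> omega)]
    have e : a - 3 ≠ 0 := by omega
    simp [List.filter, e]
  have hfb2 : fromBeta (0 :: [a+4,2,1]) = [a+1] := by
    rw [fromBeta_eq ((List.perm_append_singleton 0 [a+4,2,1]).symm)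
      (by simp [List.pairwise_cons] <;> omega)]
    have e : a + 4 - 3 = a + 1 := by omega
    simp [List.filter, e]
  rw [hfb1, hfb2, hA a ha, hB a ha]
  norm_num

lemma enumFrom_map_range {α : Type} (k : ℕ) (f : ℕ → ℕ) (n : ℕ) (h : ℕ × ℕ → α) :
    (List.zipIdx ((List.range k).map f) n).map h
      = (List.range k).map (fun i => h (f i, n + i)) := by
  induction k generalizing n f with
  | zero => simp
  | succ k ih =>
      rw [List.range_succ_eq_map]
      simp only [List.map_cons, List.zipIdx_cons, List.map_map]
      rw [ih]
      congr 1
      · apply List.map_congr_left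
        intro i _
        simp only [Function.comp]
        have : n + 1 + i = n + i.succ := by omega
        rw [this]

lemma enum_c_map {α : Type} (x k : ℕ) (f : ℕ → ℕ) (h : ℕ × ℕ → α) :
    ((x :: (List.range k).map f).zipIdx.map h)
      = h (x, 0) :: (List.range k).map (fun i => h (f i, 1 + i)) := by
  rw [show (x :: (List.range k).map f).zipIdx = List.zipIdx (x :: (List.range k).map f) 0 from rfl]
  rw [List.zipIdx_cons, List.map_cons, enumFrom_map_range]

lemma enum_cc_map {α : Type} (x y k : ℕ) (f : ℕ → ℕ) (h : ℕ × ℕ → α) :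
    ((x :: y :: (List.range k).map f).zipIdx.map h)
      = h (x, 0) :: h (y, 1) :: (List.range k).map (fun i => h (f i, 2 + i)) := by
  rw [show (x :: y :: (List.range k).map f).zipIdx
      = List.zipIdx (x :: y :: (List.range k).map f) 0 from rfl]
  rw [List.zipIdx_cons, List.zipIdx_cons, List.map_cons, List.map_cons, enumFrom_map_range]

def DD (k j : ℕ) : List ℕ := (List.range j).map (fun i => k - i)

lemma sorted_DD (k j : ℕ) : (DD k j).Pairwise (· ≥ ·) := by
  rw [DD, List.pairwise_map]
  exact (List.pairwise_lt_range (n := j)).imp (fun h => by omega)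

lemma sorted_cDD {x k j : ℕ} (hk : k ≤ x) : (x :: DD k j).Pairwise (· ≥ ·) := by
  rw [List.pairwise_cons]
  refine ⟨?_, sorted_DD k j⟩
  intro b hb
  rw [DD, List.mem_map] at hb
  obtain ⟨i, -, rfl⟩ := hb
  omega

lemma sorted_ccDD {x y k j : ℕ} (hx : y ≤ x) (hk : k ≤ y) :
    (x :: y :: DD k j).Pairwise (· ≥ ·) := by
  rw [List.pairwise_cons]
  exact ⟨fun b hb => by
    rcases List.mem_cons.1 hb with rfl | hb
    · omega
    · rw [DD, List.mem_map] at hb; obtain ⟨i, -, rfl⟩ := hb; omega,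
    sorted_cDD hk⟩

lemma replicate_eq_map (j : ℕ) : List.replicate j 1 = (List.range j).map (fun _ => 1) := by
  symm
  rw [List.eq_replicate_iff]
  constructor
  · simp
  · intro b hb
    rw [List.mem_map] at hb
    obtain ⟨i, -, rfl⟩ := hb
    rfl

lemma betaSet_cc (x y k : ℕ) (f : ℕ → ℕ) :
    betaSet (x :: y :: (List.range k).map f)
      = (x + (k + 1)) :: (y + k) :: (List.range k).map (fun i => f i + (k - 1 - i)) := by
  unfold betaSet
  have hl : (x :: y :: (List.range k).map f).length = k + 2 := by simp
  rw [hl, enum_cc_map]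
  simp only []
  have e1 : k + 2 - 1 - 0 = k + 1 := by omega
  have e2 : k + 2 - 1 - 1 = k := by omega
  rw [e1, e2]
  congr 1
  congr 1
  apply List.map_congr_left
  intro i hi
  rw [List.mem_range] at hi
  have e3 : k + 2 - 1 - (2 + i) = k - 1 - i := by omega
  rw [e3]

lemma DD_split (a : ℕ) (ha : 8 ≤ a) : DD (a-5) (a-4) = DD (a-5) (a-5) ++ [0] := by
  rw [show a - 4 = (a - 5) + 1 from by omega]
  rw [DD, DD, List.range_succ, List.map_append]
  simp

lemma hb2 (a : ℕ) (ha : 8 ≤ a) :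
    betaSet ((a+1) :: 5 :: List.replicate (a-5) 1) = (2*a-3) :: a :: DD (a-5) (a-5) := by
  rw [replicate_eq_map, betaSet_cc]
  congr 1
  · omega
  congr 1
  · omega
  rw [DD]
  apply List.map_congr_left
  intro i hi
  rw [List.mem_range] at hi
  omega

lemma hb3 (a : ℕ) (ha : 8 ≤ a) :
    betaSet (4 :: 2 :: List.replicate (a-5) 1) = a :: (a-3) :: DD (a-5) (a-5) := by
  rw [replicate_eq_map, betaSet_cc]
  congr 1
  · omega
  congr 1
  · omega
  rw [DD]
  apply List.map_congr_left
  intro i hi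
  rw [List.mem_range] at hi
  omega

lemma hF1 (a : ℕ) (ha : 8 ≤ a) :
    fromBeta ((a-3) :: a :: DD (a-5) (a-5)) = 4 :: 2 :: List.replicate (a-5) 1 := by
  rw [fromBeta_eq (List.Perm.swap a (a-3) (DD (a-5) (a-5)))
    (sorted_ccDD (by omega) (by omega))]
  have hl : (a :: (a-3) :: DD (a-5) (a-5)).length = a - 3 := by
    simp [DD]; omega
  rw [hl, DD, enum_cc_map]
  simp only []
  have hmap : List.map (fun i => a - 5 - i - (a - 3 - 1 - (2 + i))) (List.range (a-5))
      = List.map (fun _ => 1) (List.range (a-5)) := by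
    apply List.map_congr_left
    intro i hi
    rw [List.mem_range] at hi
    omega
  rw [hmap]
  rw [List.filter_eq_self.mpr]
  · rw [replicate_eq_map]
    congr 1
    · omega
    congr 1
    omega
  · intro b hb
    simp only [List.mem_cons, List.mem_map, List.mem_range] at hb
    simp only [decide_eq_true_eq]
    rcases hb with rfl | rfl | ⟨i, hi, rfl⟩ <;> omega

lemma hF2 (a : ℕ) (ha : 8 ≤ a) :
    fromBeta (0 :: (2*a-3) :: DD (a-5) (a-5)) = [a+1] := by
  have hperm : (0 :: (2*a-3) :: DD (a-5) (a-5)).Perm ((2*a-3) :: DD (a-5) (a-4)) := by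
    rw [DD_split a ha]
    exact (List.Perm.swap (2*a-3) 0 _).trans
      (List.Perm.cons _ (List.perm_append_singleton 0 _).symm)
  rw [fromBeta_eq hperm (sorted_cDD (by omega))]
  have hl : ((2*a-3) :: DD (a-5) (a-4)).length = a - 3 := by
    simp [DD]; omega
  rw [hl, DD, enum_c_map]
  simp only []
  rw [List.filter_cons_of_pos (by simp only [decide_eq_true_eq]; omega)]
  rw [List.filter_eq_nil_iff.mpr]
  · congr 1
    omega
  · intro b hb
    rw [List.mem_map] at hb
    obtain ⟨i, hi, rfl⟩ := hb
    rw [List.mem_range] at hi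
    simp only [decide_eq_true_eq]
    omega

lemma hF3 (a : ℕ) (ha : 8 ≤ a) :
    fromBeta (0 :: a :: DD (a-5) (a-5)) = [4] := by
  have hperm : (0 :: a :: DD (a-5) (a-5)).Perm (a :: DD (a-5) (a-4)) := by
    rw [DD_split a ha]
    exact (List.Perm.swap a 0 _).trans
      (List.Perm.cons _ (List.perm_append_singleton 0 _).symm)
  rw [fromBeta_eq hperm (sorted_cDD (by omega))]
  have hl : (a :: DD (a-5) (a-4)).length = a - 3 := by
    simp [DD]; omega
  rw [hl, DD, enum_c_map]
  simp only []
  rw [List.filter_cons_of_pos (by simp only [decide_eq_true_eq]; omega)]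
  rw [List.filter_eq_nil_iff.mpr]
  · congr 1
    omega
  · intro b hb
    rw [List.mem_map] at hb
    obtain ⟨i, hi, rfl⟩ := hb
    rw [List.mem_range] at hi
    simp only [decide_eq_true_eq]
    omega

lemma hA' (a : ℕ) (ha : 8 ≤ a) : MN [a+1] [a-3,2,1,1] = 1 := by
  have hb : betaSet [a+1] = [a+1] := by
    show [a+1+0] = _
    rw [Nat.add_zero]
  rw [MN, hb]
  simp only [List.map_cons, List.map_nil, List.sum_cons, List.sum_nil, add_zero]
  rw [if_pos (by refine ⟨by omega, ?_⟩; simp only [List.mem_singleton]; omega)]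
  have e : a + 1 - (a - 3) = 4 := by omega
  rw [e]
  have hf : List.filter (fun y => decide (4 < y ∧ y < a + 1)) [a+1] = [] := by
    simp only [List.filter_cons, List.filter_nil, decide_eq_true_eq]
    rw [if_neg (by omega)]
  rw [hf, List.erase_cons_head]
  have h4 : fromBeta [4] = [4] := by decide
  rw [h4]
  have : MN [4] [2,1,1] = 1 := by decide
  rw [this]
  norm_num

lemma sum_DD_zero (a q : ℕ) (hq : a - 5 < q) (F : ℕ → ℤ)
    (hF : ∀ x, (¬ q ≤ x) → F x = 0) :
    (List.map F (DD (a-5) (a-5))).sum = 0 := by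
  apply List.sum_eq_zero
  intro z hz
  rw [List.mem_map] at hz
  obtain ⟨x, hx, rfl⟩ := hz
  rw [DD, List.mem_map] at hx
  obtain ⟨i, hi, rfl⟩ := hx
  rw [List.mem_range] at hi
  exact hF _ (by omega)

lemma hC (a : ℕ) (ha : 8 ≤ a) :
    MN (4 :: 2 :: List.replicate (a-5) 1) [a-3,2,1,1] = (-1)^(a-5) := by
  rw [MN, hb3 a ha]
  simp only [List.map_cons, List.sum_cons]
  rw [if_neg (by
    rintro ⟨-, h2⟩
    exact h2 (by
      simp only [DD, List.mem_cons, List.mem_map, List.mem_range]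
      right; right
      exact ⟨a - 8, by omega, by omega⟩))]
  rw [if_pos (by
    refine ⟨by omega, ?_⟩
    simp only [DD, List.mem_cons, List.mem_map, List.mem_range]
    rintro (h | h | ⟨i, hi, h⟩) <;> omega)]
  have e0 : a - 3 - (a - 3) = 0 := by omega
  rw [e0]
  have hfil : List.filter (fun y => decide (0 < y ∧ y < a - 3)) (a :: (a-3) :: DD (a-5) (a-5))
      = DD (a-5) (a-5) := by
    rw [List.filter_cons_of_neg (by simp only [decide_eq_true_eq]; omega),
        List.filter_cons_of_neg (by simp only [decide_eq_true_eq]; omega),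
        List.filter_eq_self.mpr]
    intro b hb
    rw [DD, List.mem_map] at hb
    obtain ⟨i, hi, rfl⟩ := hb
    rw [List.mem_range] at hi
    simp only [decide_eq_true_eq]
    omega
  rw [hfil]
  have hlen : (DD (a-5) (a-5)).length = a - 5 := by simp [DD]
  rw [hlen]
  rw [List.erase_cons_tail (by simp only [beq_iff_eq]; omega), List.erase_cons_head]
  rw [hF3 a ha]
  have h4 : MN [4] [2,1,1] = 1 := by decide
  rw [h4]
  rw [sum_DD_zero a (a-3) (by omega) _ (fun x hx => if_neg (by rintro ⟨h1, -⟩; omega))]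
  ring

lemma hMain2 (a : ℕ) (ha : 8 ≤ a) :
    MN ((a + 1) :: 5 :: List.replicate (a - 5) 1) [a, a - 3, 2, 1, 1] = 0 := by
  rw [MN, hb2 a ha]
  simp only [List.map_cons, List.sum_cons]
  rw [if_pos (by
    refine ⟨by omega, ?_⟩
    simp only [DD, List.mem_cons, List.mem_map, List.mem_range]
    rintro (h | h | ⟨i, hi, h⟩) <;> omega)]
  rw [if_pos (by
    refine ⟨by omega, ?_⟩
    simp only [DD, List.mem_cons, List.mem_map, List.mem_range]
    rintro (h | h | ⟨i, hi, h⟩) <;> omega)]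
  have e1 : 2*a - 3 - a = a - 3 := by omega
  have e2 : a - a = 0 := by omega
  rw [e1, e2]
  have hfil1 : List.filter (fun y => decide (a - 3 < y ∧ y < 2*a-3))
      ((2*a-3) :: a :: DD (a-5) (a-5)) = [a] := by
    rw [List.filter_cons_of_neg (by simp only [decide_eq_true_eq]; omega),
        List.filter_cons_of_pos (by simp only [decide_eq_true_eq]; omega),
        List.filter_eq_nil_iff.mpr]
    intro b hb
    rw [DD, List.mem_map] at hb
    obtain ⟨i, hi, rfl⟩ := hb
    rw [List.mem_range] at hi
    simp only [decide_eq_true_eq]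
    omega
  have hfil2 : List.filter (fun y => decide (0 < y ∧ y < a))
      ((2*a-3) :: a :: DD (a-5) (a-5)) = DD (a-5) (a-5) := by
    rw [List.filter_cons_of_neg (by simp only [decide_eq_true_eq]; omega),
        List.filter_cons_of_neg (by simp only [decide_eq_true_eq]; omega),
        List.filter_eq_self.mpr]
    intro b hb
    rw [DD, List.mem_map] at hb
    obtain ⟨i, hi, rfl⟩ := hb
    rw [List.mem_range] at hi
    simp only [decide_eq_true_eq]
    omega
  rw [hfil1, hfil2]
  have hlen : (DD (a-5) (a-5)).length = a - 5 := by simp [DD]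
  rw [hlen]
  rw [List.erase_cons_head]
  rw [List.erase_cons_tail (by simp only [beq_iff_eq]; omega), List.erase_cons_head]
  rw [hF1 a ha, hF2 a ha]
  rw [hC a ha, hA' a ha]
  rw [sum_DD_zero a a (by omega) _ (fun x hx => if_neg (by rintro ⟨h1, -⟩; omega))]
  simp only [List.length_singleton, pow_one]
  ring

/-- For `a ≥ 8`, the irreducible characters of `S_{2a+1}` indexed by
`(a+1, a-2, 1, 1)` and by `(a+1, 5, 1^{a-5})` both vanish at the class of
cycle type `(a, a-3, 2, 1, 1)`. -/
theorem stmt_13 (a : ℕ) (ha : 8 ≤ a) :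
    MN [a + 1, a - 2, 1, 1] [a, a - 3, 2, 1, 1] = 0 ∧
    MN ((a + 1) :: 5 :: List.replicate (a - 5) 1) [a, a - 3, 2, 1, 1] = 0 :=
  ⟨hMain1 a ha, hMain2 a ha⟩
end

section
/- Let q ≥ 1 and let λ be a partition. The q-core of the conjugate partition λ' equals the conjugate of the q-core of λ. -/
/-- The `q`-core of a partition: the partition obtained by repeatedly
removing rim hooks of length `q` until none remain.  In terms of the
beta-set `B`, the beta-numbers in each residue class `r` modulo `q` are
pushed down to `r, r + q, …, r + (k-1)q` where `k` is their number. -/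
def qCore (q : ℕ) (l : List ℕ) : List ℕ :=
  let B := betaSet l
  fromBeta ((List.range q).flatMap (fun r =>
    (List.range ((B.filter (fun x => x % q = r)).length)).map
      (fun i => q * i + r)))

lemma betaSet_length (l : List ℕ) : (betaSet l).length = l.length := by
  simp [betaSet]

lemma betaSet_getElem (l : List ℕ) (i : ℕ) (h : i < (betaSet l).length) :
    (betaSet l)[i] = l[i]'(by simpa [betaSet_length] using h) + (l.length - 1 - i) := by
  simp [betaSet]

lemma mem_betaSet {l : List ℕ} {x : ℕ} :
    x ∈ betaSet l ↔ ∃ i, ∃ h : i < l.length, l[i] + (l.length - 1 - i) = x := by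
  rw [List.mem_iff_getElem]
  constructor
  · rintro ⟨i, h, rfl⟩
    exact ⟨i, by simpa [betaSet_length] using h, (betaSet_getElem l i h).symm⟩
  · rintro ⟨i, h, rfl⟩
    exact ⟨i, by simpa [betaSet_length] using h, betaSet_getElem l i (by simpa [betaSet_length] using h)⟩

lemma betaSet_sorted {l : List ℕ} (hl : l.Pairwise (· ≥ ·)) :
    (betaSet l).Pairwise (· > ·) := by
  rw [List.pairwise_iff_getElem]
  intro i j hi hj hij
  have hi' : i < l.length := by simpa [betaSet_length] using hi
  have hj' : j < l.length := by simpa [betaSet_length] using hj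
  have h1 : l[i] ≥ l[j] := List.pairwise_iff_getElem.mp hl i j hi' hj' hij
  rw [betaSet_getElem l i hi, betaSet_getElem l j hj]
  omega

lemma betaSet_nodup {l : List ℕ} (hl : l.Pairwise (· ≥ ·)) : (betaSet l).Nodup :=
  (betaSet_sorted hl).nodup

lemma fromBeta_sorted_eq {b : List ℕ} (hb : b.Pairwise (· ≥ ·)) :
    fromBeta b =
      (b.zipIdx.map (fun p => p.1 - (b.length - 1 - p.2))).filter (fun x => x ≠ 0) := by
  have h : List.insertionSort (· ≥ ·) b = b := hb.insertionSort_eq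
  simp only [fromBeta, h]

lemma fromBeta_perm {b b' : List ℕ} (h : b.Perm b') : fromBeta b = fromBeta b' := by
  have h2 : List.insertionSort (· ≥ ·) b = List.insertionSort (· ≥ ·) b' :=
    List.Perm.eq_of_pairwise'
      (List.pairwise_insertionSort _ b) (List.pairwise_insertionSort _ b')
      (((List.perm_insertionSort _ b).trans h).trans (List.perm_insertionSort _ b').symm)
  simp only [fromBeta, h2]

lemma fromBeta_ext {b b' : List ℕ} (hb : b.Nodup) (hb' : b'.Nodup)
    (h : ∀ x, x ∈ b ↔ x ∈ b') : fromBeta b = fromBeta b' :=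
  fromBeta_perm ((List.perm_ext_iff_of_nodup hb hb').mpr h)

lemma fromBeta_betaSet {l : List ℕ} (h1 : l.Pairwise (· ≥ ·)) (h2 : ∀ i ∈ l, 0 < i) :
    fromBeta (betaSet l) = l := by
  rw [fromBeta_sorted_eq ((betaSet_sorted h1).imp (fun h => le_of_lt h))]
  have hm : (betaSet l).zipIdx.map (fun p => p.1 - ((betaSet l).length - 1 - p.2)) = l := by
    apply List.ext_getElem (by simp [betaSet_length])
    intro i hi1 hi2
    simp only [List.getElem_map, List.getElem_zipIdx, betaSet_getElem, betaSet_length]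
    omega
  rw [hm, List.filter_eq_self.mpr]
  intro x hx
  simpa using (h2 x hx).ne'

lemma sortgap {b : List ℕ} (hb : b.Pairwise (· > ·)) :
    ∀ k i j, (hi : i < b.length) → (hj : j < b.length) → i ≤ j → j - i ≤ k →
      b[j] + (j - i) ≤ b[i] := by
  intro k
  induction k with
  | zero =>
    intro i j hi hj hij hk
    have : i = j := by omega
    subst this; omega
  | succ d ih =>
    intro i j hi hj hij hk
    rcases eq_or_lt_of_le hij with h | h
    · subst h; omega
    · have hi1 : i + 1 < b.length := by omega
      have h2 := ih (i+1) j hi1 hj (by omega) (by omega)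
      have h3 : b[i] > b[i+1] := List.pairwise_iff_getElem.mp hb i (i+1) hi hi1 (by omega)
      omega

lemma stair {b : List ℕ} (hb : b.Pairwise (· > ·)) {i : ℕ} (hi : i < b.length) :
    b.length - 1 - i ≤ b[i] := by
  have hj : b.length - 1 < b.length := by omega
  have := sortgap hb (b.length) i (b.length - 1) hi hj (by omega) (by omega)
  omega

lemma filter_gt_length_ge {v : List ℕ} (hc : v.Pairwise (· ≥ ·)) {t i : ℕ} (hi : i < v.length)
    (h : t < v[i]) : i + 1 ≤ (v.filter (fun x => t < x)).length := by
  have h1 : (v.take (i+1)).filter (fun x => t < x) = v.take (i+1) := by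
    rw [List.filter_eq_self]
    intro x hx
    obtain ⟨j, hj, rfl⟩ := List.mem_iff_getElem.mp hx
    have hj' : j < v.length := by
      have := List.length_take (i := i+1) (l := v); omega
    rw [List.getElem_take]
    have hge : v[i] ≤ v[j] := by
      rcases eq_or_lt_of_le (show j ≤ i by have := List.length_take (i := i+1) (l := v); omega) with hh | hh
      · subst hh; omega
      · exact List.pairwise_iff_getElem.mp hc j i hj' hi hh
    simpa using by omega
  have h2 := List.Sublist.length_le ((List.take_sublist (i+1) v).filter (fun x => t < x))
  rw [h1] at h2
  have := List.length_take (i := i+1) (l := v)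
  omega

lemma filter_gt_length_le {v : List ℕ} (hc : v.Pairwise (· ≥ ·)) {t i : ℕ} (hi : i < v.length)
    (h : v[i] ≤ t) : (v.filter (fun x => t < x)).length ≤ i := by
  conv_lhs => rw [← List.take_append_drop i v]
  rw [List.filter_append, List.length_append]
  have h2 : (v.drop i).filter (fun x => t < x) = [] := by
    rw [List.filter_eq_nil_iff]
    intro x hx
    obtain ⟨j, hj, rfl⟩ := List.mem_iff_getElem.mp hx
    rw [List.getElem_drop]
    have hj' : i + j < v.length := by
      have := List.length_drop (i := i) (l := v); omega
    have hge : v[i+j] ≤ v[i] := by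
      rcases Nat.eq_zero_or_pos j with hh | hh
      · subst hh; simp
      · exact List.pairwise_iff_getElem.mp hc i (i+j) hi hj' (by omega)
    simpa using by omega
  rw [h2]
  have h3 := List.length_filter_le (fun x => t < x) (v.take i)
  have := List.length_take (i := i) (l := v)
  simp only [List.length_nil]
  omega

lemma fromBeta_spec_sorted {b : List ℕ} (hb : b.Pairwise (· > ·)) :
    (fromBeta b).Pairwise (· ≥ ·) ∧ (∀ x ∈ fromBeta b, 0 < x) ∧
    (fromBeta b).length ≤ b.length ∧
    (∀ x, x ∈ b ↔ (x < b.length - (fromBeta b).length ∨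
      ∃ y ∈ betaSet (fromBeta b), y + (b.length - (fromBeta b).length) = x)) := by
  have hb' : b.Pairwise (· ≥ ·) := hb.imp (fun h => le_of_lt h)
  have hfb0 := fromBeta_sorted_eq hb'
  have hA_len : (b.zipIdx.map (fun p => p.1 - (b.length - 1 - p.2))).length = b.length := by simp
  have hA_get : ∀ i (h : i < b.length),
      (b.zipIdx.map (fun p => p.1 - (b.length - 1 - p.2)))[i]'(by rw [hA_len]; exact h)
        = b[i] - (b.length - 1 - i) := by
    intro i h; simp
  have hA_sorted : (b.zipIdx.map (fun p => p.1 - (b.length - 1 - p.2))).Pairwise (· ≥ ·) := by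
    rw [List.pairwise_iff_getElem]
    intro i j h1 h2 h3
    rw [hA_len] at h1 h2
    rw [hA_get i h1, hA_get j h2]
    have := sortgap hb b.length i j h1 h2 (by omega) (by omega)
    omega
  have hcong : (b.zipIdx.map (fun p => p.1 - (b.length - 1 - p.2))).filter (fun x => x ≠ 0)
      = (b.zipIdx.map (fun p => p.1 - (b.length - 1 - p.2))).filter (fun x => 0 < x) :=
    List.filter_congr (by intro x _; cases x <;> simp)
  have hs_le : (fromBeta b).length ≤ b.length := by
    rw [hfb0]
    have := List.length_filter_le (fun x => x ≠ 0) (b.zipIdx.map (fun p => p.1 - (b.length - 1 - p.2)))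
    omega
  have hcrit : ∀ i (h : i < b.length),
      (0 < b[i] - (b.length - 1 - i) ↔ i < (fromBeta b).length) := by
    intro i h
    constructor
    · intro hpos
      rw [← hA_get i h] at hpos
      have := filter_gt_length_ge hA_sorted (t := 0) (i := i) (by rw [hA_len]; exact h) hpos
      rw [hfb0, hcong]; omega
    · intro hlt
      by_contra hz
      have h0 : (b.zipIdx.map (fun p => p.1 - (b.length - 1 - p.2)))[i]'(by rw [hA_len]; exact h) ≤ 0 := by
        rw [hA_get i h]; omega
      have := filter_gt_length_le hA_sorted (t := 0) (i := i) (by rw [hA_len]; exact h) h0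
      rw [hfb0, hcong] at hlt; omega
  have hdrop : (b.zipIdx.map (fun p => p.1 - (b.length - 1 - p.2))).drop (fromBeta b).length
      = List.replicate (b.length - (fromBeta b).length) 0 := by
    apply List.ext_getElem (by rw [List.length_drop, hA_len, List.length_replicate])
    intro j h1 h2
    rw [List.getElem_drop, List.getElem_replicate]
    have hj : (fromBeta b).length + j < b.length := by
      rw [List.length_drop, hA_len] at h1; omega
    rw [hA_get _ hj]
    have := hcrit ((fromBeta b).length + j) hj
    omega
  have hrep : (List.replicate (b.length - (fromBeta b).length) 0).filter (fun x => x ≠ 0) = [] := by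
    rw [List.filter_eq_nil_iff]; intro a ha; rw [List.eq_of_mem_replicate ha]; simp
  have htake : fromBeta b
      = (b.zipIdx.map (fun p => p.1 - (b.length - 1 - p.2))).take (fromBeta b).length := by
    conv_lhs => rw [hfb0]
    conv_lhs => rw [← List.take_append_drop (fromBeta b).length
      (b.zipIdx.map (fun p => p.1 - (b.length - 1 - p.2)))]
    rw [List.filter_append, hdrop, hrep, List.append_nil, List.filter_eq_self]
    intro x hx
    obtain ⟨j, hj, rfl⟩ := List.mem_iff_getElem.mp hx
    have hjlen : j < (fromBeta b).length := by
      rw [List.length_take, hA_len] at hj; omega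
    rw [List.getElem_take]
    have := hcrit j (by omega)
    rw [hA_get j (by omega)]
    simp only [ne_eq, decide_eq_true_eq]
    omega
  have hμ_get : ∀ i (h : i < (fromBeta b).length),
      (fromBeta b)[i] = b[i]'(by omega) - (b.length - 1 - i) := by
    intro i h
    rw [List.getElem_of_eq htake h, List.getElem_take, hA_get i (by omega)]
  refine ⟨?_, ?_, hs_le, ?_⟩
  · rw [htake]
    exact List.Pairwise.sublist (List.take_sublist _ _) hA_sorted
  · intro x hx
    obtain ⟨j, hj, rfl⟩ := List.mem_iff_getElem.mp hx
    rw [hμ_get j hj]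
    have := hcrit j (by omega)
    omega
  · intro x
    constructor
    · intro hx
      obtain ⟨i, hi, rfl⟩ := List.mem_iff_getElem.mp hx
      by_cases his : i < (fromBeta b).length
      · right
        refine ⟨(fromBeta b)[i]'(his) + ((fromBeta b).length - 1 - i), ?_, ?_⟩
        · exact mem_betaSet.mpr ⟨i, his, rfl⟩
        · rw [hμ_get i his]
          have := (hcrit i hi).mpr his
          omega
      · left
        have h1 : ¬ (0 < b[i] - (b.length - 1 - i)) := fun hh => his ((hcrit i hi).mp hh)
        have h2 := stair hb hi
        omega
    · intro hx
      rcases hx with hx | ⟨y, hy, rfl⟩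
      · have hi : b.length - 1 - x < b.length := by omega
        have hge : b.length - 1 - x ≥ (fromBeta b).length := by omega
        have h1 : ¬ (0 < b[b.length - 1 - x]'hi - (b.length - 1 - (b.length - 1 - x))) :=
          fun hh => by have := (hcrit _ hi).mp hh; omega
        have h2 := stair hb hi
        have : b[b.length - 1 - x]'hi = x := by omega
        exact this ▸ List.getElem_mem hi
      · obtain ⟨i, his, rfl⟩ := mem_betaSet.mp hy
        have hi : i < b.length := by omega
        rw [hμ_get i his]
        have := (hcrit i hi).mpr his
        have : b[i]'hi - (b.length - 1 - i) + ((fromBeta b).length - 1 - i)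
            + (b.length - (fromBeta b).length) = b[i]'hi := by omega
        rw [this]
        exact List.getElem_mem hi

lemma fromBeta_spec {b : List ℕ} (hb : b.Nodup) :
    (fromBeta b).Pairwise (· ≥ ·) ∧ (∀ x ∈ fromBeta b, 0 < x) ∧
    (fromBeta b).length ≤ b.length ∧
    (∀ x, x ∈ b ↔ (x < b.length - (fromBeta b).length ∨
      ∃ y ∈ betaSet (fromBeta b), y + (b.length - (fromBeta b).length) = x)) := by
  have hp := List.perm_insertionSort (· ≥ ·) b
  have hsor : (List.insertionSort (· ≥ ·) b).Pairwise (· > ·) := by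
    have h1 := List.pairwise_insertionSort (· ≥ ·) b
    have h2 : (List.insertionSort (· ≥ ·) b).Nodup := (hp.nodup_iff).mpr hb
    exact (h1.and h2).imp (fun h => lt_of_le_of_ne h.1 (Ne.symm h.2))
  have hspec := fromBeta_spec_sorted hsor
  rw [fromBeta_perm hp, hp.length_eq] at hspec
  exact ⟨hspec.1, hspec.2.1, hspec.2.2.1,
    fun x => (hp.mem_iff.symm).trans (hspec.2.2.2 x)⟩

lemma fromBeta_pad_sorted {b : List ℕ} (hb : b.Pairwise (· ≥ ·)) (m : ℕ) :
    fromBeta (List.range m ++ b.map (· + m)) = fromBeta b := by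
  have hperm : (List.range m ++ b.map (· + m)).Perm (b.map (· + m) ++ (List.range m).reverse) :=
    (List.perm_append_comm).trans (List.Perm.append_left _ (List.reverse_perm _).symm)
  rw [fromBeta_perm hperm]
  have hsorted : (b.map (· + m) ++ (List.range m).reverse).Pairwise (· ≥ ·) := by
    rw [List.pairwise_append]
    refine ⟨hb.map _ (fun h => by omega), ?_, ?_⟩
    · rw [List.pairwise_reverse]
      exact (List.pairwise_lt_range).imp (fun h => le_of_lt h)
    · intro a ha y hy
      simp only [List.mem_map] at ha
      obtain ⟨x, _, rfl⟩ := ha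
      have : y < m := by
        have := List.mem_reverse.mp hy
        simpa using this
      omega
  rw [fromBeta_sorted_eq hsorted, fromBeta_sorted_eq hb]
  have hrep : (List.replicate m (0:ℕ)).filter (fun x => x ≠ 0) = [] := by
    rw [List.filter_eq_nil_iff]; intro a ha; rw [List.eq_of_mem_replicate ha]; simp
  have hmain : (b.map (· + m) ++ (List.range m).reverse).zipIdx.map
        (fun p => p.1 - ((b.map (· + m) ++ (List.range m).reverse).length - 1 - p.2))
      = b.zipIdx.map (fun p => p.1 - (b.length - 1 - p.2)) ++ List.replicate m 0 := by
    apply List.ext_getElem (by simp)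
    intro i h1 h2
    have hlen : (b.map (· + m) ++ (List.range m).reverse).length = b.length + m := by simp
    have hi' : i < b.length + m := by simpa [hlen] using h1
    simp only [List.getElem_map, List.getElem_zipIdx, hlen]
    by_cases hib : i < b.length
    · rw [List.getElem_append_left (by simpa using hib),
          List.getElem_append_left (by simpa using hib)]
      simp only [List.getElem_map, List.getElem_zipIdx]
      omega
    · rw [List.getElem_append_right (by simpa using hib),
          List.getElem_append_right (by simpa using hib)]
      rw [List.getElem_replicate]
      rw [List.getElem_reverse]
      rw [List.getElem_range]
      simp only [List.length_reverse, List.length_range, List.length_map]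
      omega
  rw [hmain, List.filter_append, hrep, List.append_nil]

lemma fromBeta_pad (b : List ℕ) (m : ℕ) :
    fromBeta (List.range m ++ b.map (· + m)) = fromBeta b := by
  have hp := List.perm_insertionSort (· ≥ ·) b
  have h1 := fromBeta_pad_sorted (List.pairwise_insertionSort (· ≥ ·) b) m
  rw [fromBeta_perm hp] at h1
  rw [← h1]
  exact fromBeta_perm (List.Perm.append_left _ (hp.symm.map _))


def padF (m : ℕ) (S : Finset ℕ) : Finset ℕ := Finset.range m ∪ S.image (· + m)

def rhoF (N : ℕ) (S : Finset ℕ) : Finset ℕ := (Finset.range N \ S).image (fun x => N - 1 - x)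

lemma mem_padF {m : ℕ} {S : Finset ℕ} {x : ℕ} :
    x ∈ padF m S ↔ x < m ∨ ∃ y ∈ S, y + m = x := by
  simp [padF]

lemma mem_rhoF {N : ℕ} {S : Finset ℕ} {x : ℕ} :
    x ∈ rhoF N S ↔ x < N ∧ N - 1 - x ∉ S := by
  simp only [rhoF, Finset.mem_image, Finset.mem_sdiff, Finset.mem_range]
  constructor
  · rintro ⟨y, ⟨hy, hyS⟩, rfl⟩
    refine ⟨by omega, ?_⟩
    have : N - 1 - (N - 1 - y) = y := by omega
    rw [this]; exact hyS
  · rintro ⟨hx, hnot⟩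
    exact ⟨N - 1 - x, ⟨by omega, hnot⟩, by omega⟩

lemma card_rhoF {N : ℕ} {S : Finset ℕ} (h : S ⊆ Finset.range N) :
    (rhoF N S).card = N - S.card := by
  rw [rhoF, Finset.card_image_of_injOn, Finset.card_sdiff_of_subset h, Finset.card_range]
  intro a ha b hb hab
  simp only [Finset.coe_sdiff, Set.mem_diff, Finset.mem_coe, Finset.mem_range] at ha hb
  have hab' : N - 1 - a = N - 1 - b := hab
  omega

lemma rhoF_padF {N z : ℕ} {S : Finset ℕ} (hz : z ≤ N) :
    rhoF N (padF z S) = rhoF (N - z) S := by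
  ext x
  rw [mem_rhoF, mem_rhoF, mem_padF]
  constructor
  · rintro ⟨hxN, hnot⟩
    have h1 : ¬ (N - 1 - x < z) := fun h => hnot (Or.inl h)
    refine ⟨by omega, fun hy => ?_⟩
    exact hnot (Or.inr ⟨_, hy, by omega⟩)
  · rintro ⟨hx, hnot⟩
    refine ⟨by omega, ?_⟩
    rintro (h | ⟨y, hy, hyx⟩)
    · omega
    · apply hnot
      have : y = N - z - 1 - x := by omega
      exact this ▸ hy

lemma conjugate_length (l : List ℕ) : (conjugate l).length = l.foldr max 0 := by
  simp [conjugate]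

lemma conjugate_getElem (l : List ℕ) (j : ℕ) (h : j < (conjugate l).length) :
    (conjugate l)[j] = (l.filter (fun p => j < p)).length := by
  simp [conjugate]

lemma le_foldr_max (l : List ℕ) : ∀ x ∈ l, x ≤ l.foldr max 0 := by
  induction l with
  | nil => simp
  | cons a t ih =>
    intro x hx
    rcases List.mem_cons.mp hx with rfl | h
    · exact le_max_left _ _
    · exact (ih x h).trans (le_max_right _ _)

lemma foldr_max_mem (l : List ℕ) : l.foldr max 0 = 0 ∨ l.foldr max 0 ∈ l := by
  induction l with
  | nil => left; rfl
  | cons a t ih =>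
    simp only [List.foldr_cons]
    rcases max_choice a (t.foldr max 0) with h | h <;> rw [h]
    · right; exact List.mem_cons_self
    · rcases ih with h2 | h2
      · left; exact h2
      · right; exact List.mem_cons_of_mem a h2

lemma conjugate_sorted (l : List ℕ) : (conjugate l).Pairwise (· ≥ ·) := by
  rw [List.pairwise_iff_getElem]
  intro i j h1 h2 h3
  rw [conjugate_getElem _ _ h1, conjugate_getElem _ _ h2]
  rw [← List.countP_eq_length_filter, ← List.countP_eq_length_filter]
  exact List.countP_mono_left (fun x _ hx => by
    simp only [decide_eq_true_eq] at hx ⊢; omega)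

lemma conjugatePos (l : List ℕ) : ∀ x ∈ conjugate l, 0 < x := by
  intro x hx
  obtain ⟨j, hj, rfl⟩ := List.mem_iff_getElem.mp hx
  rw [conjugate_getElem _ _ hj]
  rcases foldr_max_mem l with h0 | hm
  · rw [conjugate_length, h0] at hj; omega
  · have hjlt : j < l.foldr max 0 := by rwa [conjugate_length] at hj
    have hmem : l.foldr max 0 ∈ l.filter (fun p => j < p) :=
      List.mem_filter.mpr ⟨hm, by simpa using hjlt⟩
    exact List.length_pos_of_mem hmem

lemma conj_beta_finset {μ : List ℕ} (h1 : μ.Pairwise (· ≥ ·)) (h2 : ∀ x ∈ μ, 0 < x)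
    {N : ℕ} (hN : μ.length + μ.foldr max 0 ≤ N) :
    padF (N - μ.length - μ.foldr max 0) ((betaSet (conjugate μ)).toFinset)
      = rhoF N ((betaSet μ).toFinset) := by
  have hbmu_range : (betaSet μ).toFinset ⊆ Finset.range N := by
    intro x hx
    obtain ⟨i, hi, rfl⟩ := mem_betaSet.mp (List.mem_toFinset.mp hx)
    have := le_foldr_max μ _ (List.getElem_mem hi)
    simp only [Finset.mem_range]
    omega
  have hsub : padF (N - μ.length - μ.foldr max 0) ((betaSet (conjugate μ)).toFinset)
      ⊆ rhoF N ((betaSet μ).toFinset) := by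
    intro x hx
    rcases mem_padF.mp hx with hxw | ⟨y, hy, rfl⟩
    · rw [mem_rhoF]
      refine ⟨by omega, fun hc => ?_⟩
      obtain ⟨i, hi, hix⟩ := mem_betaSet.mp (List.mem_toFinset.mp hc)
      have := le_foldr_max μ _ (List.getElem_mem hi)
      omega
    · obtain ⟨j, hj, hjy⟩ := mem_betaSet.mp (List.mem_toFinset.mp hy)
      rw [conjugate_getElem _ _ hj, conjugate_length] at hjy
      rw [conjugate_length] at hj
      have hcjs : (μ.filter (fun p => j < p)).length ≤ μ.length :=
        List.length_filter_le _ _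
      rw [mem_rhoF]
      refine ⟨by omega, fun hc => ?_⟩
      obtain ⟨i, hi, hix⟩ := mem_betaSet.mp (List.mem_toFinset.mp hc)
      rcases Nat.lt_or_ge j μ[i] with hcase | hcase
      · have key := filter_gt_length_ge h1 hi hcase
        omega
      · have key := filter_gt_length_le h1 hi hcase
        omega
  have hdisj : Disjoint (Finset.range (N - μ.length - μ.foldr max 0))
      (((betaSet (conjugate μ)).toFinset).image (· + (N - μ.length - μ.foldr max 0))) := by
    rw [Finset.disjoint_left]
    intro a ha hb
    obtain ⟨y, _, rfl⟩ := Finset.mem_image.mp hb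
    rw [Finset.mem_range] at ha
    omega
  have hcard1 : (padF (N - μ.length - μ.foldr max 0) ((betaSet (conjugate μ)).toFinset)).card
      = N - μ.length := by
    rw [padF, Finset.card_union_of_disjoint hdisj, Finset.card_range,
      Finset.card_image_of_injective _ (fun a b hab => by omega),
      List.toFinset_card_of_nodup (betaSet_nodup (conjugate_sorted μ)),
      betaSet_length, conjugate_length]
    omega
  have hcard2 : (rhoF N ((betaSet μ).toFinset)).card = N - μ.length := by
    rw [card_rhoF hbmu_range, List.toFinset_card_of_nodup (betaSet_nodup h1), betaSet_length]
  exact Finset.eq_of_subset_of_card_le hsub (by omega)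

lemma fromBeta_ext' {b b' : List ℕ} (hb : b.Nodup) (hb' : b'.Nodup)
    (h : b.toFinset = b'.toFinset) : fromBeta b = fromBeta b' :=
  fromBeta_ext hb hb' (fun x => by rw [← List.mem_toFinset, h, List.mem_toFinset])

lemma pad_list_toFinset (m : ℕ) (c : List ℕ) :
    (List.range m ++ c.map (· + m)).toFinset = padF m c.toFinset := by
  ext x
  simp [padF, List.mem_toFinset]

lemma nodup_pad_list {c : List ℕ} (hc : c.Nodup) (m : ℕ) :
    (List.range m ++ c.map (· + m)).Nodup := by
  rw [List.nodup_append]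
  refine ⟨List.nodup_range (n := m), hc.map (fun a b hab => by omega), ?_⟩
  intro a ha b hb hab
  rw [List.mem_range] at ha
  obtain ⟨y, _, rfl⟩ := List.mem_map.mp hb
  omega

lemma nodup_rho_list (N : ℕ) (p : ℕ → Bool) :
    (((List.range N).filter p).map (fun x => N - 1 - x)).Nodup := by
  apply List.Nodup.map_on _ ((List.nodup_range (n := N)).filter p)
  intro a ha b hb hab
  have ha' : a < N := List.mem_range.mp (List.mem_of_mem_filter ha)
  have hb' : b < N := List.mem_range.mp (List.mem_of_mem_filter hb)
  omega

lemma rho_list_toFinset (N : ℕ) (b : List ℕ) [DecidablePred (· ∈ b)] :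
    (((List.range N).filter (fun x => x ∉ b)).map (fun x => N - 1 - x)).toFinset
      = rhoF N b.toFinset := by
  ext x
  simp only [List.mem_toFinset, List.mem_map, List.mem_filter, List.mem_range, mem_rhoF,
    decide_eq_true_eq]
  constructor
  · rintro ⟨y, ⟨hy, hyb⟩, rfl⟩
    refine ⟨by omega, ?_⟩
    have : N - 1 - (N - 1 - y) = y := by omega
    rw [this]; exact hyb
  · rintro ⟨hx, hnot⟩
    exact ⟨N - 1 - x, ⟨by omega, hnot⟩, by omega⟩

lemma conjugate_fromBeta {b : List ℕ} (hb : b.Nodup) {N : ℕ}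
    (hN1 : ∀ x ∈ b, x < N)
    (hN2 : b.length + (fromBeta b).foldr max 0 ≤ N) :
    conjugate (fromBeta b)
      = fromBeta (((List.range N).filter (fun x => x ∉ b)).map (fun x => N - 1 - x)) := by
  obtain ⟨hs1, hs2, hs3, hs4⟩ := fromBeta_spec hb
  have hbfin : b.toFinset = padF (b.length - (fromBeta b).length)
      ((betaSet (fromBeta b)).toFinset) := by
    ext x
    rw [List.mem_toFinset, hs4 x, mem_padF]
    constructor
    · rintro (h | ⟨y, hy, rfl⟩)
      · exact Or.inl h
      · exact Or.inr ⟨y, List.mem_toFinset.mpr hy, rfl⟩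
    · rintro (h | ⟨y, hy, rfl⟩)
      · exact Or.inl h
      · exact Or.inr ⟨y, List.mem_toFinset.mp hy, rfl⟩
  have hchain : rhoF N b.toFinset
      = padF ((N - (b.length - (fromBeta b).length)) - (fromBeta b).length
            - (fromBeta b).foldr max 0)
          ((betaSet (conjugate (fromBeta b))).toFinset) := by
    rw [hbfin, rhoF_padF (by omega),
      ← conj_beta_finset hs1 hs2 (by omega)]
  have h2 : conjugate (fromBeta b)
      = fromBeta (List.range ((N - (b.length - (fromBeta b).length)) - (fromBeta b).length
            - (fromBeta b).foldr max 0)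
          ++ (betaSet (conjugate (fromBeta b))).map
            (· + ((N - (b.length - (fromBeta b).length)) - (fromBeta b).length
            - (fromBeta b).foldr max 0))) := by
    rw [fromBeta_pad, fromBeta_betaSet (conjugate_sorted _) (conjugatePos _)]
  rw [h2]
  apply fromBeta_ext'
  · exact nodup_pad_list (betaSet_nodup (conjugate_sorted _)) _
  · exact nodup_rho_list N _
  · rw [pad_list_toFinset, rho_list_toFinset, ← hchain]

def coreList (q : ℕ) (b : List ℕ) : List ℕ :=
  (List.range q).flatMap (fun r =>
    (List.range ((b.filter (fun x => x % q = r)).length)).map (fun i => q * i + r))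

def coreF (q : ℕ) (S : Finset ℕ) : Finset ℕ :=
  (Finset.range q).biUnion (fun r =>
    (Finset.range ((S.filter (fun x => x % q = r)).card)).image (fun i => q * i + r))

lemma mem_coreList {q : ℕ} (hq : 0 < q) {b : List ℕ} {x : ℕ} :
    x ∈ coreList q b ↔ x / q < (b.filter (fun y => y % q = x % q)).length := by
  simp only [coreList, List.mem_flatMap, List.mem_map, List.mem_range]
  constructor
  · rintro ⟨r, hr, i, hi, rfl⟩
    have h1 : (q * i + r) % q = r := by rw [Nat.mul_add_mod, Nat.mod_eq_of_lt hr]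
    have h2 : (q * i + r) / q = i := by rw [Nat.mul_add_div hq, Nat.div_eq_of_lt hr, Nat.add_zero]
    rw [h1, h2]; exact hi
  · intro h
    exact ⟨x % q, Nat.mod_lt x hq, x / q, h, Nat.div_add_mod x q⟩

lemma mem_coreF {q : ℕ} (hq : 0 < q) {S : Finset ℕ} {x : ℕ} :
    x ∈ coreF q S ↔ x / q < (S.filter (fun y => y % q = x % q)).card := by
  simp only [coreF, Finset.mem_biUnion, Finset.mem_image, Finset.mem_range]
  constructor
  · rintro ⟨r, hr, i, hi, rfl⟩
    have h1 : (q * i + r) % q = r := by rw [Nat.mul_add_mod, Nat.mod_eq_of_lt hr]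
    have h2 : (q * i + r) / q = i := by rw [Nat.mul_add_div hq, Nat.div_eq_of_lt hr, Nat.add_zero]
    rw [h1, h2]; exact hi
  · intro h
    exact ⟨x % q, Nat.mod_lt x hq, x / q, h, Nat.div_add_mod x q⟩

lemma nodup_coreList {q : ℕ} (hq : 0 < q) (b : List ℕ) : (coreList q b).Nodup := by
  rw [coreList, List.nodup_flatMap]
  constructor
  · intro r _
    exact List.nodup_range.map
      (fun i j hij => Nat.eq_of_mul_eq_mul_left hq (Nat.add_right_cancel hij))
  · rw [List.pairwise_iff_getElem]
    intro i j h1 h2 h3 a ha hb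
    rw [List.getElem_range] at ha hb
    obtain ⟨u, _, rfl⟩ := List.mem_map.mp ha
    obtain ⟨v, _, hv⟩ := List.mem_map.mp hb
    have hiq : i < q := by simpa using h1
    have hjq : j < q := by simpa using h2
    have hmi : (q * u + i) % q = i := by rw [Nat.mul_add_mod, Nat.mod_eq_of_lt hiq]
    have hmj : (q * v + j) % q = j := by rw [Nat.mul_add_mod, Nat.mod_eq_of_lt hjq]
    rw [hv] at hmj
    omega

lemma filter_length_card {q r : ℕ} {b : List ℕ} (hb : b.Nodup) :
    (b.filter (fun x => x % q = r)).length = (b.toFinset.filter (fun x => x % q = r)).card := by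
  rw [← List.toFinset_card_of_nodup (hb.filter _), List.toFinset_filter]
  congr 1
  ext x
  simp

lemma coreList_toFinset {q : ℕ} (hq : 0 < q) {b : List ℕ} (hb : b.Nodup) :
    (coreList q b).toFinset = coreF q b.toFinset := by
  ext x
  rw [List.mem_toFinset, mem_coreList hq, mem_coreF hq, filter_length_card hb]

lemma card_coreF {q : ℕ} (hq : 0 < q) (S : Finset ℕ) : (coreF q S).card = S.card := by
  rw [coreF, Finset.card_biUnion]
  · have hc : ∀ r, ((Finset.range ((S.filter (fun x => x % q = r)).card)).image
        (fun i => q * i + r)).card = (S.filter (fun x => x % q = r)).card := fun r => by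
      rw [Finset.card_image_of_injective _
        (fun i j hij => Nat.eq_of_mul_eq_mul_left hq (Nat.add_right_cancel hij)),
        Finset.card_range]
    rw [Finset.sum_congr rfl (fun r _ => hc r)]
    exact (Finset.card_eq_sum_card_fiberwise
      (fun x _ => Finset.mem_range.mpr (Nat.mod_lt x hq))).symm
  · intro r hr r' hr' hne
    rw [Function.onFun, Finset.disjoint_left]
    intro a ha hb
    obtain ⟨u, _, rfl⟩ := Finset.mem_image.mp ha
    obtain ⟨v, _, hv⟩ := Finset.mem_image.mp hb
    rw [Finset.mem_coe, Finset.mem_range] at hr hr'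
    have hmi : (q * u + r) % q = r := by rw [Nat.mul_add_mod, Nat.mod_eq_of_lt hr]
    have hmj : (q * v + r') % q = r' := by rw [Nat.mul_add_mod, Nat.mod_eq_of_lt hr']
    rw [hv] at hmj
    omega

lemma div_lt_div_iff_dvd {q N x : ℕ} (hq : 0 < q) (hdvd : q ∣ N) :
    x < N ↔ x / q < N / q := by
  constructor
  · intro h
    by_contra hc
    push_neg at hc
    have h1 : q * (N / q) ≤ q * (x / q) := Nat.mul_le_mul_left q hc
    have h2 : x / q * q ≤ x := Nat.div_mul_le_self x q
    rw [Nat.mul_div_cancel' hdvd] at h1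
    rw [Nat.mul_comm] at h1
    omega
  · intro h
    by_contra hc
    push_neg at hc
    exact absurd (Nat.div_le_div_right (c := q) hc) (by omega)

lemma card_range_filter_mod {q N r : ℕ} (hq : 0 < q) (hr : r < q) (hdvd : q ∣ N) :
    ((Finset.range N).filter (fun x => x % q = r)).card = N / q := by
  have himg : (Finset.range N).filter (fun x => x % q = r)
      = (Finset.range (N / q)).image (fun i => q * i + r) := by
    ext x
    simp only [Finset.mem_filter, Finset.mem_range, Finset.mem_image]
    constructor
    · rintro ⟨hx, hmod⟩
      refine ⟨x / q, (div_lt_div_iff_dvd hq hdvd).mp hx, ?_⟩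
      rw [← hmod]; exact Nat.div_add_mod x q
    · rintro ⟨i, hi, rfl⟩
      have h1 : (q * i + r) % q = r := by rw [Nat.mul_add_mod, Nat.mod_eq_of_lt hr]
      have h2 : (q * i + r) / q = i := by
        rw [Nat.mul_add_div hq, Nat.div_eq_of_lt hr, Nat.add_zero]
      exact ⟨(div_lt_div_iff_dvd hq hdvd).mpr (by rw [h2]; exact hi), h1⟩
  rw [himg, Finset.card_image_of_injective _
    (fun i j hij => Nat.eq_of_mul_eq_mul_left hq (Nat.add_right_cancel hij)), Finset.card_range]

lemma coreF_subset_range {q N : ℕ} (hq : 0 < q) (hdvd : q ∣ N) {S : Finset ℕ}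
    (hS : S ⊆ Finset.range N) : coreF q S ⊆ Finset.range N := by
  intro x hx
  rw [mem_coreF hq] at hx
  have h1 := Finset.card_le_card
    (Finset.filter_subset_filter (fun y => y % q = x % q) hS)
  rw [card_range_filter_mod hq (Nat.mod_lt x hq) hdvd] at h1
  exact Finset.mem_range.mpr ((div_lt_div_iff_dvd hq hdvd).mpr (by omega))

lemma abstract_arith {A B q x c N : ℕ} (e1 : A + B + q = N) (hxe : B + c = x) (hc : c < q) :
    N - 1 - x = A + (q - 1 - c) := by omega

lemma reflect_decomp {q : ℕ} (hq : 0 < q) {N x : ℕ} (hdvd : q ∣ N) (hx : x < N) :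
    (N - 1 - x) / q = N / q - 1 - x / q ∧ (N - 1 - x) % q = q - 1 - x % q := by
  have hc : x % q < q := Nat.mod_lt x hq
  have ha : x / q < N / q := (div_lt_div_iff_dvd hq hdvd).mp hx
  have hxe : q * (x / q) + x % q = x := Nat.div_add_mod x q
  have hNe : q * (N / q) = N := Nat.mul_div_cancel' hdvd
  have e0 : (N / q - 1 - x / q) + (x / q) + 1 = N / q := by omega
  have e1 : q * (N / q - 1 - x / q) + q * (x / q) + q = N := by
    calc q * (N / q - 1 - x / q) + q * (x / q) + q
        = q * ((N / q - 1 - x / q) + (x / q) + 1) := by ring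
      _ = N := by rw [e0, hNe]
  have key : N - 1 - x = q * (N / q - 1 - x / q) + (q - 1 - x % q) :=
    abstract_arith e1 hxe hc
  constructor
  · rw [key, Nat.mul_add_div hq,
      Nat.div_eq_of_lt (show q - 1 - x % q < q by omega), Nat.add_zero]
  · rw [key, Nat.mul_add_mod, Nat.mod_eq_of_lt (show q - 1 - x % q < q by omega)]

lemma count_rho {q : ℕ} (hq : 0 < q) {N r : ℕ} (hr : r < q) (hdvd : q ∣ N) {S : Finset ℕ}
    (hS : S ⊆ Finset.range N) :
    ((rhoF N S).filter (fun y => y % q = r)).card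
      = N / q - (S.filter (fun y => y % q = q - 1 - r)).card := by
  rw [rhoF, Finset.filter_image]
  have hcong : ((Finset.range N \ S).filter (fun a => (N - 1 - a) % q = r))
      = (Finset.range N \ S).filter (fun a => a % q = q - 1 - r) := by
    apply Finset.filter_congr
    intro a ha
    have haN : a < N := by
      have := (Finset.mem_sdiff.mp ha).1
      rwa [Finset.mem_range] at this
    have hd := (reflect_decomp hq hdvd haN).2
    have hma : a % q < q := Nat.mod_lt a hq
    constructor <;> intro hh <;> omega
  rw [hcong]
  rw [Finset.card_image_of_injOn ?inj]
  case inj =>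
    intro a ha b hb hab
    simp only [Finset.coe_filter, Set.mem_setOf_eq, Finset.mem_sdiff, Finset.mem_range] at ha hb
    have : N - 1 - a = N - 1 - b := hab
    omega
  have hsd : (Finset.range N \ S).filter (fun a => a % q = q - 1 - r)
      = (Finset.range N).filter (fun a => a % q = q - 1 - r)
        \ S.filter (fun a => a % q = q - 1 - r) := by
    ext a
    simp only [Finset.mem_filter, Finset.mem_sdiff]
    tauto
  rw [hsd, Finset.card_sdiff_of_subset (Finset.filter_subset_filter _ hS),
    card_range_filter_mod hq (by omega) hdvd]

lemma coreF_rhoF {q : ℕ} (hq : 0 < q) {N : ℕ} (hdvd : q ∣ N) {S : Finset ℕ}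
    (hS : S ⊆ Finset.range N) : coreF q (rhoF N S) = rhoF N (coreF q S) := by
  ext x
  rw [mem_coreF hq, mem_rhoF, count_rho hq (Nat.mod_lt x hq) hdvd hS]
  have hk : (S.filter (fun y => y % q = q - 1 - x % q)).card ≤ N / q := by
    have h1 := Finset.card_le_card
      (Finset.filter_subset_filter (fun y => y % q = q - 1 - x % q) hS)
    rwa [card_range_filter_mod hq (by omega) hdvd] at h1
  constructor
  · intro h
    have hxN : x < N := (div_lt_div_iff_dvd hq hdvd).mpr (by omega)
    refine ⟨hxN, ?_⟩
    rw [mem_coreF hq]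
    have hd := reflect_decomp hq hdvd hxN
    rw [hd.1, hd.2]
    omega
  · rintro ⟨hxN, hnot⟩
    rw [mem_coreF hq] at hnot
    have hd := reflect_decomp hq hdvd hxN
    rw [hd.1, hd.2] at hnot
    have hax : x / q < N / q := (div_lt_div_iff_dvd hq hdvd).mp hxN
    omega

lemma pred_decomp {q : ℕ} (hq : 0 < q) {x : ℕ} (hx : 1 ≤ x) :
    (x % q = 0 → (x - 1) / q = x / q - 1 ∧ (x - 1) % q = q - 1) ∧
    (x % q ≠ 0 → (x - 1) / q = x / q ∧ (x - 1) % q = x % q - 1) := by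
  have hc : x % q < q := Nat.mod_lt x hq
  have hxe : q * (x / q) + x % q = x := Nat.div_add_mod x q
  constructor
  · intro h0
    have ha : 1 ≤ x / q := by
      rcases Nat.eq_zero_or_pos (x / q) with h | h
      · rw [h0, h] at hxe; omega
      · exact h
    have e0 : (x / q - 1) + 1 = x / q := by omega
    have e1 : q * (x / q - 1) + q = q * (x / q) := by
      calc q * (x / q - 1) + q = q * ((x / q - 1) + 1) := by ring
        _ = q * (x / q) := by rw [e0]
    have key : x - 1 = q * (x / q - 1) + (q - 1) := by omega
    constructor
    · rw [key, Nat.mul_add_div hq, Nat.div_eq_of_lt (show q - 1 < q by omega), Nat.add_zero]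
    · rw [key, Nat.mul_add_mod, Nat.mod_eq_of_lt (show q - 1 < q by omega)]
  · intro h0
    have key : x - 1 = q * (x / q) + (x % q - 1) := by omega
    constructor
    · rw [key, Nat.mul_add_div hq, Nat.div_eq_of_lt (show x % q - 1 < q by omega), Nat.add_zero]
    · rw [key, Nat.mul_add_mod, Nat.mod_eq_of_lt (show x % q - 1 < q by omega)]

lemma succ_mod {q : ℕ} (hq : 0 < q) (y : ℕ) :
    (y + 1) % q = if y % q = q - 1 then 0 else y % q + 1 := by
  have hc : y % q < q := Nat.mod_lt y hq
  have hxe : q * (y / q) + y % q = y := Nat.div_add_mod y q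
  by_cases h : y % q = q - 1
  · rw [if_pos h]
    have e1 : q * (y / q) + q = q * (y / q + 1) := by ring
    have key : y + 1 = q * (y / q + 1) := by omega
    rw [key, Nat.mul_mod_right]
  · rw [if_neg h]
    have key : y + 1 = q * (y / q) + (y % q + 1) := by omega
    rw [key, Nat.mul_add_mod, Nat.mod_eq_of_lt (show y % q + 1 < q by omega)]

lemma count_pad1 {q : ℕ} (hq : 0 < q) (S : Finset ℕ) {x : ℕ} (hx : 1 ≤ x) :
    ((padF 1 S).filter (fun y => y % q = x % q)).card
      = (if x % q = 0 then 1 else 0) + (S.filter (fun y => y % q = (x - 1) % q)).card := by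
  have hdisj : Disjoint ((Finset.range 1).filter (fun y => y % q = x % q))
      ((S.image (· + 1)).filter (fun y => y % q = x % q)) := by
    rw [Finset.disjoint_left]
    intro a ha hb
    have h1 : a < 1 := Finset.mem_range.mp (Finset.mem_filter.mp ha).1
    obtain ⟨y, _, rfl⟩ := Finset.mem_image.mp (Finset.mem_filter.mp hb).1
    omega
  rw [padF, Finset.filter_union, Finset.card_union_of_disjoint hdisj]
  have hpart1 : ((Finset.range 1).filter (fun y => y % q = x % q)).card
      = if x % q = 0 then 1 else 0 := by
    rw [Finset.range_one, Finset.filter_singleton]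
    by_cases h : x % q = 0
    · rw [if_pos h, if_pos (show (0:ℕ) % q = x % q by simp [h])]
      simp
    · rw [if_neg h, if_neg (show ¬ ((0:ℕ) % q = x % q) by simp; omega)]
      simp
  have hpart2 : ((S.image (· + 1)).filter (fun y => y % q = x % q)).card
      = (S.filter (fun y => y % q = (x - 1) % q)).card := by
    rw [Finset.filter_image]
    rw [Finset.card_image_of_injective _ (fun a b hab => by omega)]
    congr 1
    apply Finset.filter_congr
    intro y _
    have hcy : y % q < q := Nat.mod_lt y hq
    have hcx : x % q < q := Nat.mod_lt x hq
    have hs := succ_mod hq y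
    have hp := pred_decomp hq hx
    by_cases h1 : y % q = q - 1 <;> by_cases h2 : x % q = 0
    · rw [hs, if_pos h1, (hp.1 h2).2]
      constructor <;> intro <;> omega
    · rw [hs, if_pos h1, (hp.2 h2).2]
      constructor <;> intro <;> omega
    · rw [hs, if_neg h1, (hp.1 h2).2]
      constructor <;> intro <;> omega
    · rw [hs, if_neg h1, (hp.2 h2).2]
      constructor <;> intro <;> omega
  rw [hpart1, hpart2]

lemma padF_zero (S : Finset ℕ) : padF 0 S = S := by
  ext x
  rw [mem_padF]
  constructor
  · rintro (h | ⟨y, hy, rfl⟩)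
    · omega
    · simpa using hy
  · intro h
    exact Or.inr ⟨x, h, by omega⟩

lemma padF_padF (m : ℕ) (S : Finset ℕ) : padF 1 (padF m S) = padF (m + 1) S := by
  ext x
  simp only [mem_padF]
  constructor
  · rintro (h | ⟨y, h2 | ⟨z, hz, rfl⟩, rfl⟩)
    · exact Or.inl (by omega)
    · exact Or.inl (by omega)
    · exact Or.inr ⟨z, hz, by omega⟩
  · rintro (h | ⟨z, hz, rfl⟩)
    · rcases Nat.eq_zero_or_pos x with rfl | hx
      · exact Or.inl (by omega)
      · exact Or.inr ⟨x - 1, Or.inl (by omega), by omega⟩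
    · exact Or.inr ⟨z + m, Or.inr ⟨z, hz, rfl⟩, by omega⟩

lemma coreF_pad1 {q : ℕ} (hq : 0 < q) (S : Finset ℕ) :
    coreF q (padF 1 S) = padF 1 (coreF q S) := by
  ext x
  rw [mem_coreF hq, mem_padF]
  rcases Nat.eq_zero_or_pos x with rfl | hx
  · simp only [Nat.zero_div]
    constructor
    · intro _
      exact Or.inl (by omega)
    · intro _
      exact Finset.card_pos.mpr ⟨0, Finset.mem_filter.mpr
        ⟨mem_padF.mpr (Or.inl (by omega)), rfl⟩⟩
  · rw [count_pad1 hq S hx]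
    constructor
    · intro h
      right
      refine ⟨x - 1, ?_, by omega⟩
      rw [mem_coreF hq]
      rcases eq_or_ne (x % q) 0 with hc | hc
      · have hd := (pred_decomp hq hx).1 hc
        rw [hd.1]
        rw [if_pos hc] at h
        have ha : 1 ≤ x / q := by
          have : q ∣ x := Nat.dvd_of_mod_eq_zero hc
          exact (Nat.one_le_div_iff hq).mpr (Nat.le_of_dvd (by omega) this)
        omega
      · have hd := (pred_decomp hq hx).2 hc
        rw [hd.1]
        rw [if_neg hc] at h
        omega
    · rintro (h | ⟨y, hy, hyx⟩)
      · omega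
      · rw [mem_coreF hq] at hy
        have hy' : y = x - 1 := by omega
        subst hy'
        rcases eq_or_ne (x % q) 0 with hc | hc
        · rw [if_pos hc]
          have hd := (pred_decomp hq hx).1 hc
          rw [hd.1] at hy
          omega
        · rw [if_neg hc]
          have hd := (pred_decomp hq hx).2 hc
          rw [hd.1] at hy
          omega

lemma coreF_padF {q : ℕ} (hq : 0 < q) (m : ℕ) (S : Finset ℕ) :
    coreF q (padF m S) = padF m (coreF q S) := by
  induction m with
  | zero => rw [padF_zero, padF_zero]
  | succ d ih =>
    rw [← padF_padF, coreF_pad1 hq, ih, padF_padF]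




/-- For `q ≥ 1` and a partition `l`, the `q`-core of the conjugate partition
equals the conjugate of the `q`-core. -/
theorem stmt_17 (q : ℕ) (hq : 1 ≤ q) (n : ℕ) (l : List ℕ)
    (hl : IsPartition l n) :
    qCore q (conjugate l) = conjugate (qCore q l) := by
  obtain ⟨hsort, hpos, -⟩ := hl
  have hq0 : 0 < q := hq
  have e1 : qCore q l = fromBeta (coreList q (betaSet l)) := rfl
  have e2 : qCore q (conjugate l) = fromBeta (coreList q (betaSet (conjugate l))) := rfl
  obtain ⟨N, hdvd, hKle⟩ : ∃ N, q ∣ N ∧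
      l.length + l.foldr max 0 + (fromBeta (coreList q (betaSet l))).foldr max 0 + 1 ≤ N :=
    ⟨q * (l.length + l.foldr max 0 + (fromBeta (coreList q (betaSet l))).foldr max 0 + 1),
      dvd_mul_right _ _, Nat.le_mul_of_pos_left _ hq0⟩
  have hβnodup : (betaSet l).Nodup := betaSet_nodup hsort
  have hSrange : (betaSet l).toFinset ⊆ Finset.range N := by
    intro x hx
    obtain ⟨i, hi, rfl⟩ := mem_betaSet.mp (List.mem_toFinset.mp hx)
    have := le_foldr_max l _ (List.getElem_mem hi)
    exact Finset.mem_range.mpr (by omega)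
  have hclist_nodup := nodup_coreList hq0 (betaSet l)
  have hclist_fin : (coreList q (betaSet l)).toFinset = coreF q ((betaSet l).toFinset) :=
    coreList_toFinset hq0 hβnodup
  have hclist_len : (coreList q (betaSet l)).length = l.length := by
    rw [← List.toFinset_card_of_nodup hclist_nodup, hclist_fin, card_coreF hq0,
      List.toFinset_card_of_nodup hβnodup, betaSet_length]
  have hclist_lt : ∀ x ∈ coreList q (betaSet l), x < N := by
    intro x hx
    have h1 : x ∈ coreF q ((betaSet l).toFinset) := by
      rw [← hclist_fin]; exact List.mem_toFinset.mpr hx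
    exact Finset.mem_range.mp (coreF_subset_range hq0 hdvd hSrange h1)
  have hconj := conjugate_fromBeta hclist_nodup (N := N) hclist_lt (by rw [hclist_len]; omega)
  rw [e1, e2, hconj]
  have hβ'nodup : (betaSet (conjugate l)).Nodup := betaSet_nodup (conjugate_sorted l)
  have hL_nodup := nodup_coreList hq0 (betaSet (conjugate l))
  rw [← fromBeta_pad (coreList q (betaSet (conjugate l))) (N - l.length - l.foldr max 0)]
  apply fromBeta_ext'
  · exact nodup_pad_list hL_nodup _
  · exact nodup_rho_list N _
  · rw [pad_list_toFinset, rho_list_toFinset, coreList_toFinset hq0 hβ'nodup, hclist_fin]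
    rw [← coreF_rhoF hq0 hdvd hSrange]
    rw [← conj_beta_finset hsort hpos (N := N) (by omega)]
    rw [coreF_padF hq0]
end
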